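/- arXiv:0907.1591 — 6 statements merged into one kernel-verified Lean document; each statement's English description precedes it below -/
import Mathlib

section
/- Let G be a finite simple graph whose edges can be oriented so that every vertex has indegree at most k, and suppose Δ(G) ≥ 2k. Then ρ(G) ≤ 2√(k(Δ(G) − k)). -/
open SimpleGraph Finset
open scoped Classical

noncomputable def specRad {V : Type*} [Fintype V] [DecidableEq V] (G : SimpleGraph V) : ℝ :=
  sSup {μ : ℝ | Module.End.HasEigenvalue (Matrix.toLin' (G.adjMatrix ℝ)) μ}

theorem hayes_orientation_bound {V : Type*} [Fintype V] [DecidableEq V]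
    (G : SimpleGraph V) (k : ℕ) (r : V → V → Prop)
    (horient : ∀ u v, G.Adj u v ↔ (r u v ∨ r v u))
    (hanti : ∀ u v, ¬ (r u v ∧ r v u))
    (hindeg : ∀ v, (Finset.univ.filter (fun u => r u v)).card ≤ k)
    (hD : 2 * k ≤ G.maxDegree) :
    specRad G ≤ 2 * Real.sqrt ((k : ℝ) * ((G.maxDegree : ℝ) - k)) := by
  classical
  set D : ℝ := (G.maxDegree : ℝ) with hDdef
  set B : ℝ := 2 * Real.sqrt ((k : ℝ) * (D - (k : ℝ))) with hBdef
  have hB0 : 0 ≤ B := by positivity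
  apply Real.sSup_le _ hB0
  rintro μ hμ
  obtain ⟨x, hx⟩ := hμ.exists_hasEigenvector
  have hxe : (G.adjMatrix ℝ).mulVec x = μ • x := by
    have := hx.apply_eq_smul
    rwa [Matrix.toLin'_apply] at this
  have hx0 := hx.right
  set S : ℝ := ∑ v, x v * x v with hSdef
  have hS : 0 < S := by
    obtain ⟨v, hv⟩ := Function.ne_iff.mp hx0
    exact Finset.sum_pos' (fun i _ => mul_self_nonneg _)
      ⟨v, Finset.mem_univ v, mul_self_pos.mpr hv⟩
  have hrow : ∀ v, ∑ u, (G.adjMatrix ℝ) v u * x u = μ * x v := by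
    intro v
    have := congrFun hxe v
    simpa [Matrix.mulVec, dotProduct] using this
  set T : ℝ := ∑ u, ∑ v, (if r u v then x u * x v else 0) with hTdef
  have hQ : μ * S = T + T := by
    calc μ * S = ∑ v, (∑ u, (G.adjMatrix ℝ) v u * x u) * x v := by
          rw [hSdef, Finset.mul_sum]
          exact Finset.sum_congr rfl fun v _ => by rw [hrow v]; ring
      _ = ∑ v, ∑ u, ((if r v u then x u * x v else 0) + (if r u v then x u * x v else 0)) := by
          refine Finset.sum_congr rfl fun v _ => ?_
          rw [Finset.sum_mul]
          refine Finset.sum_congr rfl fun u _ => ?_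
          rw [SimpleGraph.adjMatrix_apply]
          by_cases h1 : r v u <;> by_cases h2 : r u v
          · exact absurd ⟨h1, h2⟩ (hanti v u)
          · simp [h1, h2, (horient v u).mpr (Or.inl h1)]
          · simp [h1, h2, (horient v u).mpr (Or.inr h2)]
          · have hadj : ¬ G.Adj v u := fun h => by
              rcases (horient v u).mp h with h | h
              · exact h1 h
              · exact h2 h
            simp [h1, h2, hadj]
      _ = (∑ v, ∑ u, (if r v u then x u * x v else 0))
            + (∑ v, ∑ u, (if r u v then x u * x v else 0)) := by
          rw [← Finset.sum_add_distrib]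
          exact Finset.sum_congr rfl fun v _ => by rw [← Finset.sum_add_distrib]
      _ = T + T := by
          congr 1
          · rw [hTdef]
            exact Finset.sum_congr rfl fun a _ => Finset.sum_congr rfl fun b _ => by
              rw [mul_comm]
          · rw [hTdef, Finset.sum_comm]
  rcases Nat.eq_zero_or_pos k with hk | hk
  · have hT : T = 0 := by
      refine Finset.sum_eq_zero fun u _ => Finset.sum_eq_zero fun v _ => ?_
      have hr : ¬ r u v := by
        intro h
        have h1 := hindeg v
        have h2 : 0 < (Finset.univ.filter (fun u => r u v)).card :=
          Finset.card_pos.mpr ⟨u, by simp [h]⟩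
        omega
      simp [hr]
    have h0 : μ * S = 0 := by rw [hQ, hT]; ring
    have hμ0 : μ = 0 := by
      rcases mul_eq_zero.mp h0 with h | h
      · exact h
      · exact absurd h hS.ne'
    rw [hμ0]; exact hB0
  · -- main case
    have hk1 : (1 : ℝ) ≤ (k : ℝ) := by exact_mod_cast hk
    have hDk : (k : ℝ) ≤ D - k := by
      have : (2 * k : ℝ) ≤ D := by rw [hDdef]; exact_mod_cast hD
      linarith
    have hm : (0 : ℝ) < D - k := by linarith
    set t : ℝ := Real.sqrt ((k : ℝ) / (D - k)) with htdef
    have ht : 0 < t := Real.sqrt_pos.mpr (by positivity)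
    have ht1 : t ≤ 1 := by
      rw [htdef]
      rw [show (1:ℝ) = Real.sqrt 1 by simp]
      apply Real.sqrt_le_sqrt
      rw [div_le_one hm]
      linarith
    have htm : t * (D - k) = Real.sqrt ((k : ℝ) * (D - k)) := by
      rw [htdef, show D - (k:ℝ) = Real.sqrt ((D - k)^2) from (Real.sqrt_sq hm.le).symm,
        ← Real.sqrt_mul (by positivity)]
      congr 1
      field_simp
      ring_nf
      rw [Real.sq_sqrt (by nlinarith)]
    have hkt : (k : ℝ) / t = Real.sqrt ((k : ℝ) * (D - k)) := by
      rw [htdef, show (k:ℝ) = Real.sqrt ((k:ℝ)^2) from (Real.sqrt_sq (by positivity)).symm,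
        ← Real.sqrt_div (by positivity)]
      congr 1
      rw [Real.sqrt_sq (by positivity)]
      field_simp
    set od : V → ℝ := fun v => ((Finset.univ.filter (fun u => r v u)).card : ℝ) with hoddef
    set idg : V → ℝ := fun v => ((Finset.univ.filter (fun u => r u v)).card : ℝ) with hidgdef
    have hdeg : ∀ v, od v + idg v ≤ D := by
      intro v
      have hunion : G.neighborFinset v
          = (Finset.univ.filter (fun u => r v u)) ∪ (Finset.univ.filter (fun u => r u v)) := by
        ext u
        simp [SimpleGraph.mem_neighborFinset, horient v u]
      have hdisj : Disjoint (Finset.univ.filter (fun u => r v u))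
          (Finset.univ.filter (fun u => r u v)) := by
        rw [Finset.disjoint_left]
        intro a ha hb
        simp only [Finset.mem_filter] at ha hb
        exact hanti v a ⟨ha.2, hb.2⟩
      have hcard : G.degree v
          = (Finset.univ.filter (fun u => r v u)).card
            + (Finset.univ.filter (fun u => r u v)).card := by
        rw [← SimpleGraph.card_neighborFinset_eq_degree, hunion,
          Finset.card_union_of_disjoint hdisj]
      have hle : G.degree v ≤ G.maxDegree := G.degree_le_maxDegree v
      have : (G.degree v : ℝ) ≤ D := by rw [hDdef]; exact_mod_cast hle
      rw [hoddef, hidgdef]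
      simp only
      rw [← Nat.cast_add, ← hcard]
      exact this
    have hidk : ∀ v, idg v ≤ (k : ℝ) := by
      intro v
      simp only [hidgdef]
      exact_mod_cast hindeg v
    have hper : ∀ v, t * od v + (1 / t) * idg v ≤ B := by
      intro v
      have hB' : B = t * (D - k) + (1 / t) * k := by
        rw [hBdef, htm.symm]
        have : (1 / t) * k = (k : ℝ) / t := by ring
        rw [this, hkt, htm]
        ring
      have h1 : t ≤ 1 / t := by
        rw [le_div_iff₀ ht]
        nlinarith
      have h2 : 0 ≤ idg v := by positivity
      have h3 : 0 ≤ od v := by positivity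
      have hsum := hdeg v
      have hid := hidk v
      nlinarith [mul_nonneg (sub_nonneg.mpr h1) (sub_nonneg.mpr hid),
        mul_nonneg ht.le (sub_nonneg.mpr hsum)]
    -- bound T + T
    have hTT : T + T ≤ ∑ u, ∑ v, (if r u v then t * (x u * x u) + (1/t) * (x v * x v) else 0) := by
      have : T + T = ∑ u, ∑ v, (if r u v then 2 * (x u * x v) else 0) := by
        rw [hTdef, ← Finset.sum_add_distrib]
        refine Finset.sum_congr rfl fun u _ => ?_
        rw [← Finset.sum_add_distrib]
        refine Finset.sum_congr rfl fun v _ => ?_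
        by_cases h : r u v <;> simp [h] <;> ring
      rw [this]
      refine Finset.sum_le_sum fun u _ => Finset.sum_le_sum fun v _ => ?_
      by_cases h : r u v
      · simp only [h, if_true]
        have h1t : t * (1 / t) = 1 := by field_simp
        nlinarith [sq_nonneg (t * x u - x v), ht, mul_pos ht ht]
      · simp [h]
    have hR : (∑ u, ∑ v, (if r u v then t * (x u * x u) + (1/t) * (x v * x v) else 0))
        = ∑ v, (t * od v + (1/t) * idg v) * (x v * x v) := by
      have hsplit : ∀ u v : V, (if r u v then t * (x u * x u) + (1/t) * (x v * x v) else 0)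
          = (if r u v then t * (x u * x u) else 0) + (if r u v then (1/t) * (x v * x v) else 0) := by
        intro u v
        by_cases h : r u v <;> simp [h]
      calc (∑ u, ∑ v, (if r u v then t * (x u * x u) + (1/t) * (x v * x v) else 0))
          = (∑ u, ∑ v, (if r u v then t * (x u * x u) else 0))
            + (∑ u, ∑ v, (if r u v then (1/t) * (x v * x v) else 0)) := by
            rw [← Finset.sum_add_distrib]
            exact Finset.sum_congr rfl fun u _ => by
              rw [← Finset.sum_add_distrib]
              exact Finset.sum_congr rfl fun v _ => hsplit u v
        _ = (∑ u, t * (x u * x u) * od u) + (∑ v, (1/t) * (x v * x v) * idg v) := by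
            congr 1
            · refine Finset.sum_congr rfl fun u _ => ?_
              rw [← Finset.sum_filter, Finset.sum_const, nsmul_eq_mul]
              rw [hoddef]; ring
            · rw [Finset.sum_comm]
              refine Finset.sum_congr rfl fun v _ => ?_
              rw [← Finset.sum_filter, Finset.sum_const, nsmul_eq_mul]
              rw [hidgdef]; ring
        _ = ∑ v, (t * od v + (1/t) * idg v) * (x v * x v) := by
            rw [← Finset.sum_add_distrib]
            exact Finset.sum_congr rfl fun v _ => by ring
    have hfinal : μ * S ≤ B * S := by
      rw [hQ, hSdef, Finset.mul_sum]
      calc T + T ≤ ∑ v, (t * od v + (1/t) * idg v) * (x v * x v) := by rw [← hR]; exact hTT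
        _ ≤ ∑ v, B * (x v * x v) :=
            Finset.sum_le_sum fun v _ =>
              mul_le_mul_of_nonneg_right (hper v) (mul_self_nonneg _)
    exact le_of_mul_le_mul_right hfinal hS
end

section
/- Every finite simple k-degenerate graph G with Δ(G) ≥ 2k satisfies ρ(G) ≤ 2√(k(Δ(G) − k)). -/
open SimpleGraph Finset
open scoped Classical

/-- `G` is `k`-degenerate: every nonempty (induced) subgraph has a vertex of degree at most `k`. -/
def Degenerate {V : Type*} [Fintype V] [DecidableEq V] (G : SimpleGraph V) (k : ℕ) : Prop :=
  ∀ s : Finset V, s.Nonempty → ∃ v ∈ s, (s.filter (fun u => G.Adj v u)).card ≤ k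

/-- The weight function used in the Rayleigh-quotient argument. -/
noncomputable def wgt (k : ℕ) (t : ℝ) (d : ℕ) : ℝ :=
  t * (min k d : ℕ) + ((d : ℝ) - (min k d : ℕ)) / t

lemma wgt_step (k : ℕ) {t : ℝ} (ht : 1 ≤ t) (d : ℕ) :
    wgt k t d + 1 / t ≤ wgt k t (d + 1) := by
  have ht0 : (0:ℝ) < t := lt_of_lt_of_le one_pos ht
  unfold wgt
  rcases lt_or_ge d k with h | h
  · rw [min_eq_right h.le, min_eq_right h]
    push_cast
    have h1 : 1 / t ≤ t := by rw [div_le_iff₀ ht0]; nlinarith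
    have h2 : ((d:ℝ) - d) / t = 0 := by simp
    have h3 : ((d:ℝ) + 1 - (d + 1)) / t = 0 := by ring_nf
    rw [h2, h3]; nlinarith
  · rw [min_eq_left h, min_eq_left (le_trans h (Nat.le_succ d))]
    push_cast
    have : ((d:ℝ) + 1 - k) / t = ((d:ℝ) - k) / t + 1 / t := by ring
    rw [this]; linarith

lemma wgt_of_le {k : ℕ} {t : ℝ} (d : ℕ) (hd : d ≤ k) : wgt k t d = t * d := by
  unfold wgt; rw [min_eq_right hd]; simp

lemma wgt_le (k d D : ℕ) {t : ℝ} (ht : 1 ≤ t) (hd : d ≤ D) :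
    wgt k t d ≤ t * k + ((D:ℝ) - k)/t := by
  have ht0 : (0:ℝ) < t := lt_of_lt_of_le one_pos ht
  unfold wgt
  have hm1 : ((min k d : ℕ):ℝ) ≤ k := by exact_mod_cast min_le_left k d
  have hm2 : ((min k d : ℕ):ℝ) ≤ d := by exact_mod_cast min_le_right k d
  have hdD : (d:ℝ) ≤ D := by exact_mod_cast hd
  have ht2 : (1:ℝ) ≤ t^2 := by nlinarith
  push_cast at hm1 hm2 ⊢
  have key : (t * (((k:ℝ)) ⊓ (d:ℝ)) + ((d:ℝ) - ((k:ℝ) ⊓ (d:ℝ))) / t) * t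
      ≤ (t * k + ((D:ℝ) - k)/t) * t := by
    field_simp
    nlinarith [mul_nonneg (sub_nonneg.2 ht2) (sub_nonneg.2 hm1)]
  exact le_of_mul_le_mul_right key ht0

lemma tC_eq (k D : ℕ) (hk : 1 ≤ k) (hD : 2*k ≤ D) :
    Real.sqrt (((D:ℝ) - k)/k) * k + ((D:ℝ) - k)/Real.sqrt (((D:ℝ) - k)/k)
      = 2 * Real.sqrt ((k:ℝ) * ((D:ℝ) - k)) := by
  have hk0 : (0:ℝ) < k := by exact_mod_cast hk
  have hDk : (k:ℝ) ≤ (D:ℝ) - k := by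
    have h2 : ((2*k : ℕ):ℝ) ≤ (D:ℝ) := by exact_mod_cast hD
    push_cast at h2; linarith
  have hDk0 : (0:ℝ) < (D:ℝ) - k := lt_of_lt_of_le hk0 hDk
  have ha0 : 0 < Real.sqrt k := Real.sqrt_pos.2 hk0
  have hb0 : 0 < Real.sqrt ((D:ℝ) - k) := Real.sqrt_pos.2 hDk0
  have ha : Real.sqrt k ^ 2 = (k:ℝ) := Real.sq_sqrt hk0.le
  have hb : Real.sqrt ((D:ℝ) - k) ^ 2 = (D:ℝ) - k := Real.sq_sqrt hDk0.le
  have hdiv : Real.sqrt (((D:ℝ) - k)/k) = Real.sqrt ((D:ℝ) - k) / Real.sqrt k :=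
    Real.sqrt_div hDk0.le k
  have hmul : Real.sqrt ((k:ℝ) * ((D:ℝ) - k)) = Real.sqrt k * Real.sqrt ((D:ℝ) - k) :=
    Real.sqrt_mul hk0.le _
  rw [hdiv, hmul]
  field_simp
  nlinarith [ha, hb, mul_pos ha0 hb0]

lemma quad_bound {V : Type*} [Fintype V] [DecidableEq V] (G : SimpleGraph V) (k : ℕ)
    (hdeg : Degenerate G k) {t : ℝ} (ht : 1 ≤ t) (y : V → ℝ)
    (s : Finset V) :
    ∑ v ∈ s, ∑ u ∈ s.filter (fun u => G.Adj v u), y v * y u ≤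
      ∑ v ∈ s, wgt k t ((s.filter (fun u => G.Adj v u)).card) * (y v)^2 := by
  have ht0 : (0:ℝ) < t := lt_of_lt_of_le one_pos ht
  induction s using Finset.strongInduction with
  | _ s ih =>
    rcases s.eq_empty_or_nonempty with rfl | hs
    · simp
    obtain ⟨v, hv, hf⟩ := hdeg s hs
    have hvs' : v ∉ s.erase v := Finset.notMem_erase v s
    have IH := ih (s.erase v) (Finset.erase_ssubset hv)
    -- filter facts
    have hfil : ∀ a, s.filter (fun u => G.Adj a u)
        = if G.Adj a v then insert v ((s.erase v).filter (fun u => G.Adj a u))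
          else (s.erase v).filter (fun u => G.Adj a u) := by
      intro a
      rw [Finset.filter_erase]
      by_cases h : G.Adj a v
      · rw [if_pos h, Finset.insert_erase]
        simp [Finset.mem_filter, hv, h]
      · rw [if_neg h, Finset.erase_eq_of_notMem]
        simp [Finset.mem_filter, h]
    have hfilv : s.filter (fun u => G.Adj v u) = (s.erase v).filter (fun u => G.Adj v u) := by
      rw [hfil v, if_neg (G.loopless.irrefl v)]
    have hFk : ((s.erase v).filter (fun u => G.Adj v u)).card ≤ k := by
      rw [← hfilv]; exact hf
    -- decompose LHS
    have hL : ∑ a ∈ s, ∑ u ∈ s.filter (fun u => G.Adj a u), y a * y u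
        = (∑ a ∈ s.erase v, ∑ u ∈ (s.erase v).filter (fun u => G.Adj a u), y a * y u)
          + 2 * ∑ b ∈ (s.erase v).filter (fun u => G.Adj v u), y v * y b := by
      rw [← Finset.add_sum_erase _ _ hv, hfilv]
      have h1 : ∀ a ∈ s.erase v, ∑ u ∈ s.filter (fun u => G.Adj a u), y a * y u
          = (if G.Adj a v then y a * y v else 0)
            + ∑ u ∈ (s.erase v).filter (fun u => G.Adj a u), y a * y u := by
        intro a ha
        rw [hfil a]
        by_cases h : G.Adj a v
        · rw [if_pos h, if_pos h, Finset.sum_insert]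
          simp [Finset.mem_filter, hvs']
        · rw [if_neg h, if_neg h, zero_add]
      rw [Finset.sum_congr rfl h1, Finset.sum_add_distrib]
      have h2 : ∑ a ∈ s.erase v, (if G.Adj a v then y a * y v else 0)
          = ∑ b ∈ (s.erase v).filter (fun u => G.Adj v u), y v * y b := by
        rw [← Finset.sum_filter]
        apply Finset.sum_congr
        · apply Finset.filter_congr; intro a _; simp [G.adj_comm]
        · intro a _; ring
      rw [h2]; ring
    -- bound the cross term
    have hcross : 2 * ∑ b ∈ (s.erase v).filter (fun u => G.Adj v u), y v * y b
        ≤ t * ((s.erase v).filter (fun u => G.Adj v u)).card * (y v)^2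
          + ∑ b ∈ (s.erase v).filter (fun u => G.Adj v u), (y b)^2 / t := by
      rw [Finset.mul_sum]
      have hterm : ∀ b ∈ (s.erase v).filter (fun u => G.Adj v u),
          2 * (y v * y b) ≤ t * (y v)^2 + (y b)^2 / t := by
        intro b _
        have key : (2 * (y v * y b)) * t ≤ (t * (y v)^2 + (y b)^2 / t) * t := by
          field_simp
          nlinarith [sq_nonneg (t * y v - y b)]
        exact le_of_mul_le_mul_right key ht0
      calc ∑ b ∈ (s.erase v).filter (fun u => G.Adj v u), 2 * (y v * y b)
          ≤ ∑ b ∈ (s.erase v).filter (fun u => G.Adj v u), (t * (y v)^2 + (y b)^2 / t) :=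
            Finset.sum_le_sum hterm
        _ = t * ((s.erase v).filter (fun u => G.Adj v u)).card * (y v)^2
            + ∑ b ∈ (s.erase v).filter (fun u => G.Adj v u), (y b)^2 / t := by
            rw [Finset.sum_add_distrib, Finset.sum_const, nsmul_eq_mul]
            simp_rw [div_eq_mul_inv]
            ring
    -- decompose RHS
    have hcard : ∀ a ∈ s.erase v, (s.filter (fun u => G.Adj a u)).card
        = ((s.erase v).filter (fun u => G.Adj a u)).card + (if G.Adj a v then 1 else 0) := by
      intro a _
      rw [hfil a]
      by_cases h : G.Adj a v
      · rw [if_pos h, if_pos h, Finset.card_insert_of_notMem]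
        simp [Finset.mem_filter, hvs']
      · rw [if_neg h, if_neg h, add_zero]
    have hR : (∑ a ∈ s.erase v, wgt k t (((s.erase v).filter (fun u => G.Adj a u)).card) * (y a)^2)
          + (∑ b ∈ (s.erase v).filter (fun u => G.Adj v u), (y b)^2 / t)
          + t * ((s.erase v).filter (fun u => G.Adj v u)).card * (y v)^2
        ≤ ∑ a ∈ s, wgt k t ((s.filter (fun u => G.Adj a u)).card) * (y a)^2 := by
      rw [← Finset.add_sum_erase _ _ hv, hfilv]
      have hwv : wgt k t (((s.erase v).filter (fun u => G.Adj v u)).card)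
          = t * ((s.erase v).filter (fun u => G.Adj v u)).card := wgt_of_le _ hFk
      rw [hwv]
      have h3 : ∑ b ∈ (s.erase v).filter (fun u => G.Adj v u), (y b)^2 / t
          = ∑ a ∈ s.erase v, (if G.Adj a v then (y a)^2 / t else 0) := by
        rw [← Finset.sum_filter]
        apply Finset.sum_congr
        · symm; apply Finset.filter_congr; intro a _; simp [G.adj_comm]
        · intro a _; rfl
      rw [h3, ← Finset.sum_add_distrib]
      have h4 : ∀ a ∈ s.erase v,
          wgt k t (((s.erase v).filter (fun u => G.Adj a u)).card) * (y a)^2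
            + (if G.Adj a v then (y a)^2 / t else 0)
          ≤ wgt k t ((s.filter (fun u => G.Adj a u)).card) * (y a)^2 := by
        intro a ha
        rw [hcard a ha]
        by_cases h : G.Adj a v
        · rw [if_pos h, if_pos h]
          have hstep := wgt_step k ht (((s.erase v).filter (fun u => G.Adj a u)).card)
          have hy2 : 0 ≤ (y a)^2 := sq_nonneg _
          calc wgt k t (((s.erase v).filter (fun u => G.Adj a u)).card) * (y a)^2 + (y a)^2 / t
              = (wgt k t (((s.erase v).filter (fun u => G.Adj a u)).card) + 1/t) * (y a)^2 := by
                ring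
            _ ≤ wgt k t (((s.erase v).filter (fun u => G.Adj a u)).card + 1) * (y a)^2 :=
                mul_le_mul_of_nonneg_right hstep hy2
        · rw [if_neg h, if_neg h, add_zero, add_zero]
      linarith [Finset.sum_le_sum h4]
    linarith [hL, hcross, hR, IH]

lemma empty_of_deg0 {V : Type*} [Fintype V] [DecidableEq V] (G : SimpleGraph V)
    (hdeg : Degenerate G 0) : G.adjMatrix ℝ = 0 := by
  ext v u
  simp only [SimpleGraph.adjMatrix_apply, Matrix.zero_apply, ite_eq_right_iff, one_ne_zero]
  intro h
  obtain ⟨w, hw, hc⟩ := hdeg {v, u} ⟨v, by simp⟩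
  rw [Nat.le_zero, Finset.card_eq_zero] at hc
  rcases Finset.mem_insert.1 hw with rfl | hw'
  · have : u ∈ ({w, u} : Finset V).filter (fun x => G.Adj w x) := by
      simp [h]
    rw [hc] at this; exact absurd this (Finset.notMem_empty u)
  · rw [Finset.mem_singleton] at hw'; subst hw'
    have : v ∈ ({v, w} : Finset V).filter (fun x => G.Adj w x) := by
      simp [h.symm]
    rw [hc] at this; exact absurd this (Finset.notMem_empty v)

lemma eig_le {V : Type*} [Fintype V] [DecidableEq V] (G : SimpleGraph V) (μ C : ℝ)
    (h : Module.End.HasEigenvalue (Matrix.toLin' (G.adjMatrix ℝ)) μ)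
    (hQ : ∀ x : V → ℝ, ∑ v, ∑ u ∈ univ.filter (fun u => G.Adj v u), |x v| * |x u|
        ≤ C * ∑ v, (x v)^2) : μ ≤ C := by
  obtain ⟨x, hx⟩ := h.exists_hasEigenvector
  have h1 : (G.adjMatrix ℝ).mulVec x = μ • x := by
    rw [← Matrix.toLin'_apply]; exact hx.apply_eq_smul
  have h3 : ∀ v, ∑ u, (G.adjMatrix ℝ) v u * x u = μ * x v := by
    intro v
    have := congrFun h1 v
    simpa [Matrix.mulVec, dotProduct] using this
  have hS : 0 < ∑ v, (x v)^2 := by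
    obtain ⟨v, hv⟩ := Function.ne_iff.1 hx.2
    have : 0 < (x v)^2 := by nlinarith [abs_pos.2 hv, sq_abs (x v)]
    exact lt_of_lt_of_le this (Finset.single_le_sum (fun u _ => sq_nonneg (x u)) (Finset.mem_univ v))
  have key : μ * ∑ v, (x v)^2 ≤ C * ∑ v, (x v)^2 := by
    have e1 : μ * ∑ v, (x v)^2 = ∑ v, (∑ u, (G.adjMatrix ℝ) v u * x u) * x v := by
      rw [Finset.mul_sum]
      apply Finset.sum_congr rfl
      intro v _
      rw [h3 v]; ring
    have e2 : ∀ v, (∑ u, (G.adjMatrix ℝ) v u * x u) * x v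
        = ∑ u ∈ univ.filter (fun u => G.Adj v u), x v * x u := by
      intro v
      rw [Finset.sum_mul, Finset.sum_filter]
      apply Finset.sum_congr rfl
      intro u _
      by_cases h : G.Adj v u <;> simp [h, SimpleGraph.adjMatrix_apply] <;> ring
    rw [e1]
    calc ∑ v, (∑ u, (G.adjMatrix ℝ) v u * x u) * x v
        = ∑ v, ∑ u ∈ univ.filter (fun u => G.Adj v u), x v * x u := by
          exact Finset.sum_congr rfl (fun v _ => e2 v)
      _ ≤ ∑ v, ∑ u ∈ univ.filter (fun u => G.Adj v u), |x v| * |x u| := by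
          apply Finset.sum_le_sum; intro v _
          apply Finset.sum_le_sum; intro u _
          calc x v * x u ≤ |x v * x u| := le_abs_self _
            _ = |x v| * |x u| := abs_mul _ _
      _ ≤ C * ∑ v, (x v)^2 := hQ x
  exact le_of_mul_le_mul_right key hS

theorem hayes_degenerate_bound {V : Type*} [Fintype V] [DecidableEq V]
    (G : SimpleGraph V) (k : ℕ) (hdeg : Degenerate G k) (hD : 2 * k ≤ G.maxDegree) :
    specRad G ≤ 2 * Real.sqrt ((k : ℝ) * ((G.maxDegree : ℝ) - k)) := by
  have hC0 : 0 ≤ 2 * Real.sqrt ((k:ℝ) * ((G.maxDegree:ℝ) - k)) := by positivity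
  apply Real.sSup_le _ hC0
  intro μ hμ
  rw [Set.mem_setOf_eq] at hμ
  rcases Nat.eq_zero_or_pos k with rfl | hk
  · -- empty graph
    have hA := empty_of_deg0 G hdeg
    rw [hA] at hμ
    obtain ⟨x, hx⟩ := hμ.exists_hasEigenvector
    have h1 : (0 : Matrix V V ℝ).mulVec x = μ • x := by
      rw [← Matrix.toLin'_apply]; exact hx.apply_eq_smul
    rw [Matrix.zero_mulVec] at h1
    rcases smul_eq_zero.1 h1.symm with rfl | hx0
    · exact hC0
    · exact absurd hx0 hx.2
  · -- main case
    set D := G.maxDegree with hDdef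
    have hk0 : (0:ℝ) < k := by exact_mod_cast hk
    have hDk : (k:ℝ) ≤ (D:ℝ) - k := by
      have h2 : ((2*k : ℕ):ℝ) ≤ (D:ℝ) := by exact_mod_cast hD
      push_cast at h2; linarith
    have hDk0 : (0:ℝ) < (D:ℝ) - k := lt_of_lt_of_le hk0 hDk
    set t := Real.sqrt (((D:ℝ) - k)/k) with htdef
    have ht1 : 1 ≤ t := by
      rw [htdef, show (1:ℝ) = Real.sqrt 1 by simp]
      apply Real.sqrt_le_sqrt
      rw [le_div_iff₀ hk0]; linarith
    apply eig_le G μ _ hμ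
    intro x
    have hq := quad_bound G k hdeg ht1 (fun v => |x v|) Finset.univ
    have hcarddeg : ∀ v, ((Finset.univ.filter (fun u => G.Adj v u)).card) = G.degree v := by
      intro v
      rw [← G.card_neighborFinset_eq_degree]
      congr 1; ext u; simp
    have hbound : ∀ v : V, wgt k t ((Finset.univ.filter (fun u => G.Adj v u)).card) * |x v|^2
        ≤ (2 * Real.sqrt ((k:ℝ) * ((D:ℝ) - k))) * (x v)^2 := by
      intro v
      rw [hcarddeg v, sq_abs]
      have h1 : wgt k t (G.degree v) ≤ t * k + ((D:ℝ) - k)/t :=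
        wgt_le k (G.degree v) D ht1 (G.degree_le_maxDegree v)
      have h2 : t * k + ((D:ℝ) - k)/t = 2 * Real.sqrt ((k:ℝ) * ((D:ℝ) - k)) := tC_eq k D hk hD
      have := le_trans h1 (le_of_eq h2)
      exact mul_le_mul_of_nonneg_right this (sq_nonneg _)
    calc ∑ v, ∑ u ∈ Finset.univ.filter (fun u => G.Adj v u), |x v| * |x u|
        ≤ ∑ v, wgt k t ((Finset.univ.filter (fun u => G.Adj v u)).card) * |x v|^2 := hq
      _ ≤ ∑ v, (2 * Real.sqrt ((k:ℝ) * ((D:ℝ) - k))) * (x v)^2 :=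
          Finset.sum_le_sum (fun v _ => hbound v)
      _ = (2 * Real.sqrt ((k:ℝ) * ((D:ℝ) - k))) * ∑ v, (x v)^2 := by
          rw [Finset.mul_sum]
end

section
/- Every finite simple planar graph G with Δ(G) ≥ 6 satisfies ρ(G) ≤ 2√(3(Δ(G) − 3)). -/
open SimpleGraph Finset
open scoped Classical

/-- Planarity, via the edge bound `|E(H)| ≤ 3|V(H)| - 6` for every subgraph `H` on ≥ 3 vertices. -/
def PlanarEB {V : Type*} [Fintype V] [DecidableEq V] (G : SimpleGraph V) : Prop :=
  ∀ s : Finset V, 3 ≤ s.card →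
    (G.edgeFinset.filter (fun e => ∀ v ∈ e, v ∈ s)).card + 6 ≤ 3 * s.card

namespace PlanarSpec

variable {V : Type*} [Fintype V] [DecidableEq V]

def Valid (G : SimpleGraph V) (o : Sym2 V → V) : Prop := ∀ e ∈ G.edgeFinset, o e ∈ e

noncomputable def outD (G : SimpleGraph V) (o : Sym2 V → V) (u : V) : ℕ :=
  ((G.neighborFinset u).filter (fun v => o s(u, v) = v)).card

noncomputable def inD (G : SimpleGraph V) (o : Sym2 V → V) (u : V) : ℕ :=
  ((G.neighborFinset u).filter (fun v => ¬ o s(u, v) = v)).card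

lemma outD_add_inD (G : SimpleGraph V) (o : Sym2 V → V) (u : V) :
    outD G o u + inD G o u = G.degree u := by
  classical
  rw [outD, inD, ← SimpleGraph.card_neighborFinset_eq_degree]
  exact Finset.card_filter_add_card_filter_not (fun v => o s(u, v) = v)

def Step (G : SimpleGraph V) (o : Sym2 V → V) (u v : V) : Prop :=
  G.Adj u v ∧ o s(u, v) = v

noncomputable def flip (o : Sym2 V → V) (a c : V) : Sym2 V → V :=
  fun e => if e = s(a, c) then a else o e

variable {G : SimpleGraph V} {o : Sym2 V → V} {a c : V}

lemma flip_valid (ho : Valid G o) : Valid G (flip o a c) := by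
  intro e he
  by_cases h : e = s(a, c)
  · simp [flip, h, Sym2.mem_iff]
  · simpa [flip, h] using ho e he

omit [Fintype V] in
lemma flip_eq_of_ne {e : Sym2 V} (h : e ≠ s(a, c)) : flip o a c e = o e := by
  simp [flip, h]

lemma outD_flip_a (hac : G.Adj a c) (ho : o s(a, c) = c) :
    outD G (flip o a c) a + 1 = outD G o a := by
  have hmem : c ∈ (G.neighborFinset a).filter (fun v => o s(a, v) = v) := by
    simp [ho, hac]
  have hfe : (G.neighborFinset a).filter (fun v => flip o a c s(a, v) = v)
      = ((G.neighborFinset a).filter (fun v => o s(a, v) = v)).erase c := by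
    ext v
    by_cases hv : v = c
    · subst hv
      simp [flip, hac.ne]
    · have : s(a, v) ≠ s(a, c) := fun h => hv (Sym2.congr_right.mp h)
      simp [flip_eq_of_ne this, hv]
  have hpos : 0 < ((G.neighborFinset a).filter (fun v => o s(a, v) = v)).card :=
    Finset.card_pos.2 ⟨c, hmem⟩
  rw [outD, outD, hfe, Finset.card_erase_of_mem hmem]
  omega

lemma inD_flip_a (hac : G.Adj a c) (ho : o s(a, c) = c) :
    inD G (flip o a c) a = inD G o a + 1 := by
  have hmem : c ∉ (G.neighborFinset a).filter (fun v => ¬ o s(a, v) = v) := by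
    simp [ho]
  have hfe : (G.neighborFinset a).filter (fun v => ¬ flip o a c s(a, v) = v)
      = insert c ((G.neighborFinset a).filter (fun v => ¬ o s(a, v) = v)) := by
    ext v
    by_cases hv : v = c
    · subst hv
      simp [flip, hac.ne, hac]
    · have : s(a, v) ≠ s(a, c) := fun h => hv (Sym2.congr_right.mp h)
      simp [flip_eq_of_ne this, hv]
  rw [inD, inD, hfe, Finset.card_insert_of_notMem hmem]

lemma sca : s(c, a) = s(a, c) := Sym2.eq_swap

omit [Fintype V] in
lemma sym2_ne_of_ne {v : V} (hca : c ≠ a) (hv : v ≠ a) : s(c, v) ≠ s(a, c) := by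
  intro h
  rcases Sym2.eq_iff.mp h with ⟨h1, h2⟩ | ⟨h1, h2⟩
  · exact hca h1
  · exact hv h2

lemma outD_flip_c (hac : G.Adj a c) (ho : o s(a, c) = c) :
    outD G (flip o a c) c = outD G o c + 1 := by
  have hca : c ≠ a := hac.ne'
  have hmem : a ∉ (G.neighborFinset c).filter (fun v => o s(c, v) = v) := by
    rw [Finset.mem_filter]
    rintro ⟨-, h2⟩
    rw [sca, ho] at h2
    exact hca h2
  have hfe : (G.neighborFinset c).filter (fun v => flip o a c s(c, v) = v)
      = insert a ((G.neighborFinset c).filter (fun v => o s(c, v) = v)) := by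
    ext v
    by_cases hv : v = a
    · rw [hv]
      simp [flip, Sym2.eq_swap (a := c) (b := a), hac.symm]
    · simp [flip_eq_of_ne (sym2_ne_of_ne hca hv), hv]
  rw [outD, outD, hfe, Finset.card_insert_of_notMem hmem]

lemma inD_flip_c (hac : G.Adj a c) (ho : o s(a, c) = c) :
    inD G (flip o a c) c + 1 = inD G o c := by
  have hca : c ≠ a := hac.ne'
  have hmem : a ∈ (G.neighborFinset c).filter (fun v => ¬ o s(c, v) = v) := by
    rw [Finset.mem_filter]
    refine ⟨by simp [hac.symm], ?_⟩
    rw [sca, ho]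
    exact fun h => hca h
  have hfe : (G.neighborFinset c).filter (fun v => ¬ flip o a c s(c, v) = v)
      = ((G.neighborFinset c).filter (fun v => ¬ o s(c, v) = v)).erase a := by
    ext v
    by_cases hv : v = a
    · rw [hv]
      simp [flip, Sym2.eq_swap (a := c) (b := a)]
    · simp [flip_eq_of_ne (sym2_ne_of_ne hca hv), hv]
  have hpos : 0 < ((G.neighborFinset c).filter (fun v => ¬ o s(c, v) = v)).card :=
    Finset.card_pos.2 ⟨a, hmem⟩
  rw [inD, inD, hfe, Finset.card_erase_of_mem hmem]
  omega

lemma outD_flip_other {x : V} (hxa : x ≠ a) (hxc : x ≠ c) :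
    outD G (flip o a c) x = outD G o x := by
  rw [outD, outD]
  congr 1
  apply Finset.filter_congr
  intro v hv
  have : s(x, v) ≠ s(a, c) := by
    intro h
    rcases Sym2.eq_iff.mp h with ⟨h1, h2⟩ | ⟨h1, h2⟩
    · exact hxa h1
    · exact hxc h1
  rw [flip_eq_of_ne this]

lemma inD_flip_other {x : V} (hxa : x ≠ a) (hxc : x ≠ c) :
    inD G (flip o a c) x = inD G o x := by
  rw [inD, inD]
  congr 1
  apply Finset.filter_congr
  intro v hv
  have : s(x, v) ≠ s(a, c) := by
    intro h
    rcases Sym2.eq_iff.mp h with ⟨h1, h2⟩ | ⟨h1, h2⟩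
    · exact hxa h1
    · exact hxc h1
  rw [flip_eq_of_ne this]


lemma exists_nodup_chain {α : Type*} {r : α → α → Prop} :
    ∀ (n : ℕ) (l : List α) (a b : α), l.length ≤ n → a ≠ b →
    List.Chain r a (l ++ [b]) →
    ∃ l', List.Chain r a (l' ++ [b]) ∧ (a :: (l' ++ [b])).Nodup ∧ ∀ x ∈ l', x ∈ l := by
  intro n
  induction n with
  | zero =>
    intro l a b hl hab hc
    have : l = [] := List.eq_nil_of_length_eq_zero (Nat.le_zero.mp hl)
    subst this
    exact ⟨[], hc, by simp [hab], by simp⟩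
  | succ n ih =>
    intro l a b hl hab hc
    by_cases ha : a ∈ l
    · obtain ⟨l₁, l₂, rfl⟩ := List.append_of_mem ha
      have hre : (l₁ ++ a :: l₂) ++ [b] = l₁ ++ a :: (l₂ ++ [b]) := by
        simp [List.append_assoc]
      rw [hre] at hc
      have hc₂ : List.Chain r a (l₂ ++ [b]) := (List.isChain_cons_split.mp hc).2
      have hlen : l₂.length ≤ n := by
        simp only [List.length_append, List.length_cons] at hl
        omega
      obtain ⟨l', h1, h2, h3⟩ := ih l₂ a b hlen hab hc₂
      exact ⟨l', h1, h2, fun x hx => by simp [h3 x hx]⟩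
    · by_cases hb : b ∈ l
      · obtain ⟨l₁, l₂, rfl⟩ := List.append_of_mem hb
        have hre : (l₁ ++ b :: l₂) ++ [b] = l₁ ++ b :: (l₂ ++ [b]) := by
          simp [List.append_assoc]
        rw [hre] at hc
        have hc₁ : List.Chain r a (l₁ ++ [b]) := (List.isChain_cons_split.mp hc).1
        have hlen : l₁.length ≤ n := by
          simp only [List.length_append, List.length_cons] at hl
          omega
        obtain ⟨l', h1, h2, h3⟩ := ih l₁ a b hlen hab hc₁
        exact ⟨l', h1, h2, fun x hx => by simp [h3 x hx]⟩
      · cases l with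
        | nil => exact ⟨[], hc, by simp [hab], by simp⟩
        | cons c l'' =>
          rw [List.cons_append] at hc
          unfold List.Chain at hc
          rw [List.isChain_cons_cons] at hc
          obtain ⟨hac, hc2⟩ := hc
          have hcb : c ≠ b := fun h => hb (h ▸ List.mem_cons_self (a := c) (l := l''))
          have hlen : l''.length ≤ n := by simp at hl; omega
          obtain ⟨l', h1, h2, h3⟩ := ih l'' c b hlen hcb hc2
          refine ⟨c :: l', ?_, ?_, ?_⟩
          · rw [List.cons_append]; exact List.isChain_cons_cons.mpr ⟨hac, h1⟩
          · rw [List.cons_append, List.nodup_cons]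
            refine ⟨?_, h2⟩
            intro hmem
            rcases List.mem_cons.mp hmem with h | h
            · exact ha (h ▸ List.mem_cons_self (a := c) (l := l''))
            · rcases List.mem_append.mp h with h' | h'
              · exact ha (List.mem_cons_of_mem _ (h3 _ h'))
              · exact hab (List.mem_singleton.mp h')
          · intro x hx
            rcases List.mem_cons.mp hx with h | h
            · exact h ▸ List.mem_cons_self (a := c) (l := l'')
            · exact List.mem_cons_of_mem _ (h3 _ h)

lemma chain_imp_mem {α : Type*} {r r' : α → α → Prop} :
    ∀ (l : List α) (a : α), List.Chain r a l →
    (∀ x ∈ a :: l, ∀ y ∈ a :: l, r x y → r' x y) → List.Chain r' a l := by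
  intro l
  induction l with
  | nil => intro a _ _; exact List.Chain.nil
  | cons c l ih =>
    intro a hc h
    unfold List.Chain at hc ⊢
    rw [List.isChain_cons_cons] at hc ⊢
    refine ⟨h a (by simp) c (by simp) hc.1, ih c hc.2 ?_⟩
    intro x hx y hy hr
    exact h x (List.mem_cons_of_mem _ hx) y (List.mem_cons_of_mem _ hy) hr


lemma reverse_path (G : SimpleGraph V) :
    ∀ (l : List V) (o : Sym2 V → V) (a b : V), Valid G o →
    List.Chain (Step G o) a (l ++ [b]) → (a :: (l ++ [b])).Nodup →
    ∃ o', Valid G o' ∧ outD G o' a + 1 = outD G o a ∧ inD G o' a = inD G o a + 1 ∧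
      outD G o' b = outD G o b + 1 ∧ inD G o' b + 1 = inD G o b ∧
      ∀ x, x ≠ a → x ≠ b → outD G o' x = outD G o x ∧ inD G o' x = inD G o x := by
  intro l
  induction l with
  | nil =>
    intro o a b ho hc hnd
    rw [List.nil_append] at hc
    unfold List.Chain at hc
    rw [List.isChain_cons_cons] at hc
    obtain ⟨⟨hab, hoab⟩, -⟩ := hc
    refine ⟨flip o a b, flip_valid ho, outD_flip_a hab hoab, inD_flip_a hab hoab,
      outD_flip_c hab hoab, inD_flip_c hab hoab, ?_⟩
    intro x hxa hxb
    exact ⟨outD_flip_other hxa hxb, inD_flip_other hxa hxb⟩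
  | cons c l ih =>
    intro o a b ho hc hnd
    rw [List.cons_append] at hc
    unfold List.Chain at hc
    rw [List.isChain_cons_cons] at hc
    obtain ⟨⟨hac, hoac⟩, hc2⟩ := hc
    rw [List.cons_append, List.nodup_cons] at hnd
    obtain ⟨hamem, hnd2⟩ := hnd
    have hane : ∀ y ∈ c :: (l ++ [b]), a ≠ y := fun y hy h => hamem (h ▸ hy)
    have hab : a ≠ b := hane b (by simp)
    have hcb : c ≠ b := by
      rw [List.nodup_cons] at hnd2
      exact fun h => hnd2.1 (h ▸ (by simp : b ∈ l ++ [b]))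
    set o₁ := flip o a c with ho₁
    have ho₁v : Valid G o₁ := flip_valid ho
    have hchain : List.Chain (Step G o₁) c (l ++ [b]) := by
      apply chain_imp_mem _ _ hc2
      intro x hx y hy hr
      refine ⟨hr.1, ?_⟩
      have : s(x, y) ≠ s(a, c) := by
        intro h
        rcases Sym2.eq_iff.mp h with ⟨h1, h2⟩ | ⟨h1, h2⟩
        · exact hane x hx h1.symm
        · exact hane y hy h2.symm
      rw [ho₁, flip_eq_of_ne this]
      exact hr.2
    obtain ⟨o₂, ho₂v, hb1, hb2, hb3, hb4, hother⟩ := ih o₁ c b ho₁v hchain hnd2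
    have hanec : a ≠ c := hac.ne
    refine ⟨o₂, ho₂v, ?_, ?_, ?_, ?_, ?_⟩
    · have h1 := (hother a hanec hab).1
      rw [h1]
      exact outD_flip_a hac hoac
    · have h1 := (hother a hanec hab).2
      rw [h1]
      exact inD_flip_a hac hoac
    · rw [hb3, outD_flip_other (Ne.symm hab) (Ne.symm hcb)]
    · rw [← inD_flip_other (o := o) (a := a) (c := c) (Ne.symm hab) (Ne.symm hcb)]
      exact hb4
    · intro x hxa hxb
      by_cases hxc : x = c
      · subst hxc
        constructor
        · have h1 := outD_flip_c (o := o) hac hoac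
          rw [← ho₁] at h1
          omega
        · have h1 := inD_flip_c (o := o) hac hoac
          rw [← ho₁] at h1
          omega
      · obtain ⟨e1, e2⟩ := hother x hxc hxb
        rw [e1, e2, outD_flip_other hxa hxc, inD_flip_other hxa hxc]
        exact ⟨rfl, rfl⟩

section Part3
variable {V : Type*} [Fintype V] [DecidableEq V] {G : SimpleGraph V} {o : Sym2 V → V}

lemma valid_default (G : SimpleGraph V) : Valid G (fun e => e.out.1) :=
  fun e _ => Sym2.out_fst_mem e

noncomputable def excess (G : SimpleGraph V) (o : Sym2 V → V) : ℕ :=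
  ∑ v, ((outD G o v - 3) + (inD G o v - (G.maxDegree - 3)))

lemma sum_outD_le (R : Finset V) (hR : ∀ x ∈ R, ∀ y, Step G o x y → y ∈ R) :
    ∑ x ∈ R, outD G o x ≤ (G.edgeFinset.filter (fun e => ∀ v ∈ e, v ∈ R)).card := by
  classical
  set F : V → Finset (Sym2 V) :=
    fun x => ((G.neighborFinset x).filter (fun v => o s(x, v) = v)).image (fun v => s(x, v))
    with hF
  have hcard : ∀ x, (F x).card = outD G o x := by
    intro x
    rw [hF, outD]
    exact Finset.card_image_of_injOn (fun u _ v _ h => Sym2.congr_right.mp h)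
  have hdisj : ∀ x ∈ R, ∀ y ∈ R, x ≠ y → Disjoint (F x) (F y) := by
    intro x _ y _ hxy
    rw [Finset.disjoint_left]
    intro e hex hey
    rw [hF] at hex hey
    obtain ⟨u, hu, hue⟩ := Finset.mem_image.mp hex
    obtain ⟨w, hw, hwe⟩ := Finset.mem_image.mp hey
    obtain ⟨hunb, huo⟩ := Finset.mem_filter.mp hu
    obtain ⟨hwnb, hwo⟩ := Finset.mem_filter.mp hw
    have hse : s(x, u) = s(y, w) := hue.trans hwe.symm
    rcases Sym2.eq_iff.mp hse with ⟨h1, h2⟩ | ⟨h1, h2⟩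
    · exact hxy h1
    · -- x = w, u = y;  o s(x,u) = u and o s(y,w) = w
      rw [← hue] at hwe
      rw [hwe] at hwo
      rw [huo] at hwo
      -- u = w, so x = w = u, but u ∈ nbr x
      have : x ≠ u := (SimpleGraph.mem_neighborFinset _ _ _ |>.mp hunb).ne
      exact this (h1.trans hwo.symm)
  have hsub : R.biUnion F ⊆ G.edgeFinset.filter (fun e => ∀ v ∈ e, v ∈ R) := by
    intro e he
    obtain ⟨x, hxR, hex⟩ := Finset.mem_biUnion.mp he
    rw [hF] at hex
    obtain ⟨u, hu, hue⟩ := Finset.mem_image.mp hex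
    obtain ⟨hunb, huo⟩ := Finset.mem_filter.mp hu
    have hadj : G.Adj x u := (SimpleGraph.mem_neighborFinset _ _ _).mp hunb
    have huR : u ∈ R := hR x hxR u ⟨hadj, huo⟩
    rw [Finset.mem_filter]
    constructor
    · rw [← hue, SimpleGraph.mem_edgeFinset]
      exact hadj
    · intro v hv
      rw [← hue, Sym2.mem_iff] at hv
      rcases hv with rfl | rfl
      · exact hxR
      · exact huR
  calc ∑ x ∈ R, outD G o x = ∑ x ∈ R, (F x).card := by
        refine Finset.sum_congr rfl fun x _ => (hcard x).symm
    _ = (R.biUnion F).card := (Finset.card_biUnion hdisj).symm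
    _ ≤ _ := Finset.card_le_card hsub

lemma sum_inD_le (ho : Valid G o) (R : Finset V) (hR : ∀ x ∈ R, ∀ y, Step G o y x → y ∈ R) :
    ∑ x ∈ R, inD G o x ≤ (G.edgeFinset.filter (fun e => ∀ v ∈ e, v ∈ R)).card := by
  classical
  have key : ∀ x u, u ∈ G.neighborFinset x → ¬ o s(x, u) = u → o s(x, u) = x := by
    intro x u hu hne
    have hadj : G.Adj x u := (SimpleGraph.mem_neighborFinset _ _ _).mp hu
    have : o s(x, u) ∈ s(x, u) := ho _ (SimpleGraph.mem_edgeFinset.mpr hadj)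
    rcases Sym2.mem_iff.mp this with h | h
    · exact h
    · exact absurd h hne
  set F : V → Finset (Sym2 V) :=
    fun x => ((G.neighborFinset x).filter (fun v => ¬ o s(x, v) = v)).image (fun v => s(x, v))
    with hF
  have hcard : ∀ x, (F x).card = inD G o x := by
    intro x
    rw [hF, inD]
    exact Finset.card_image_of_injOn (fun u _ v _ h => Sym2.congr_right.mp h)
  have hdisj : ∀ x ∈ R, ∀ y ∈ R, x ≠ y → Disjoint (F x) (F y) := by
    intro x _ y _ hxy
    rw [Finset.disjoint_left]
    intro e hex hey
    rw [hF] at hex hey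
    obtain ⟨u, hu, hue⟩ := Finset.mem_image.mp hex
    obtain ⟨w, hw, hwe⟩ := Finset.mem_image.mp hey
    obtain ⟨hunb, huo⟩ := Finset.mem_filter.mp hu
    obtain ⟨hwnb, hwo⟩ := Finset.mem_filter.mp hw
    have h1 : o s(x, u) = x := key x u hunb huo
    have h2 : o s(y, w) = y := key y w hwnb hwo
    have hse : s(x, u) = s(y, w) := hue.trans hwe.symm
    rw [hse, h2] at h1
    exact hxy h1.symm
  have hsub : R.biUnion F ⊆ G.edgeFinset.filter (fun e => ∀ v ∈ e, v ∈ R) := by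
    intro e he
    obtain ⟨x, hxR, hex⟩ := Finset.mem_biUnion.mp he
    rw [hF] at hex
    obtain ⟨u, hu, hue⟩ := Finset.mem_image.mp hex
    obtain ⟨hunb, huo⟩ := Finset.mem_filter.mp hu
    have hadj : G.Adj x u := (SimpleGraph.mem_neighborFinset _ _ _).mp hunb
    have hstep : Step G o u x := by
      refine ⟨hadj.symm, ?_⟩
      rw [Sym2.eq_swap]
      exact key x u hunb huo
    have huR : u ∈ R := hR x hxR u hstep
    rw [Finset.mem_filter]
    constructor
    · rw [← hue, SimpleGraph.mem_edgeFinset]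
      exact hadj
    · intro v hv
      rw [← hue, Sym2.mem_iff] at hv
      rcases hv with rfl | rfl
      · exact hxR
      · exact huR
  calc ∑ x ∈ R, inD G o x = ∑ x ∈ R, (F x).card := by
        refine Finset.sum_congr rfl fun x _ => (hcard x).symm
    _ = (R.biUnion F).card := (Finset.card_biUnion hdisj).symm
    _ ≤ _ := Finset.card_le_card hsub

lemma e_inside_le (hplanar : PlanarEB G) (R : Finset V) (hne : R.Nonempty) :
    (G.edgeFinset.filter (fun e => ∀ v ∈ e, v ∈ R)).card ≤ 3 * R.card := by
  by_cases h3 : 3 ≤ R.card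
  · have := hplanar R h3
    omega
  · push_neg at h3
    have hcard1 : 1 ≤ R.card := Finset.card_pos.mpr hne
    have hle1 : (G.edgeFinset.filter (fun e => ∀ v ∈ e, v ∈ R)).card ≤ 1 := by
      rw [Finset.card_le_one]
      intro e1 h1 e2 h2
      obtain ⟨he1, hin1⟩ := Finset.mem_filter.mp h1
      obtain ⟨he2, hin2⟩ := Finset.mem_filter.mp h2
      revert he1 hin1 he2 hin2
      refine Sym2.inductionOn₂ e1 e2 ?_
      intro a b c d he1 hin1 he2 hin2
      have hab : a ≠ b := (SimpleGraph.mem_edgeFinset.mp he1).ne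
      have hcd : c ≠ d := (SimpleGraph.mem_edgeFinset.mp he2).ne
      have hsub1 : ({a, b} : Finset V) ⊆ R := by
        intro v hv
        rcases Finset.mem_insert.mp hv with rfl | hv
        · exact hin1 v (by simp)
        · rw [Finset.mem_singleton] at hv
          subst hv
          exact hin1 v (by simp)
      have hsub2 : ({c, d} : Finset V) ⊆ R := by
        intro v hv
        rcases Finset.mem_insert.mp hv with rfl | hv
        · exact hin2 v (by simp)
        · rw [Finset.mem_singleton] at hv
          subst hv
          exact hin2 v (by simp)
      have hc1 : ({a, b} : Finset V).card = 2 := Finset.card_pair hab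
      have hc2 : ({c, d} : Finset V).card = 2 := Finset.card_pair hcd
      have he1 : ({a, b} : Finset V) = R :=
        Finset.eq_of_subset_of_card_le hsub1 (by omega)
      have he2 : ({c, d} : Finset V) = R :=
        Finset.eq_of_subset_of_card_le hsub2 (by omega)
      have heq : ({a, b} : Finset V) = {c, d} := he1.trans he2.symm
      have hcm : c ∈ ({a, b} : Finset V) := heq ▸ (by simp : c ∈ ({c, d} : Finset V))
      have hdm : d ∈ ({a, b} : Finset V) := heq ▸ (by simp : d ∈ ({c, d} : Finset V))
      simp only [Finset.mem_insert, Finset.mem_singleton] at hcm hdm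
      rw [Sym2.eq_iff]
      rcases hcm with rfl | rfl
      · rcases hdm with rfl | rfl
        · exact absurd rfl hcd
        · exact Or.inl ⟨rfl, rfl⟩
      · rcases hdm with rfl | rfl
        · exact Or.inr ⟨rfl, rfl⟩
        · exact absurd rfl hcd
    omega

lemma orientation_exists (G : SimpleGraph V) (hplanar : PlanarEB G) (hD : 6 ≤ G.maxDegree) :
    ∃ o, Valid G o ∧ (∀ v, outD G o v ≤ 3) ∧ (∀ v, inD G o v + 3 ≤ G.maxDegree) := by
  classical
  set D := G.maxDegree with hDdef
  obtain ⟨o, hoT, hmin⟩ := Finset.exists_min_image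
    ((Finset.univ : Finset (Sym2 V → V)).filter (Valid G)) (excess G)
    ⟨fun e => e.out.1, Finset.mem_filter.mpr ⟨Finset.mem_univ _, valid_default G⟩⟩
  have ho : Valid G o := (Finset.mem_filter.mp hoT).2
  have hdeg : ∀ x, outD G o x + inD G o x ≤ D := by
    intro x
    rw [outD_add_inD]
    exact G.degree_le_maxDegree x
  refine ⟨o, ho, ?_, ?_⟩
  · -- out-degree bound
    intro v
    by_contra hv
    push_neg at hv   -- 4 ≤ outD
    set R : Finset V :=
      Finset.univ.filter (fun x => Relation.ReflTransGen (Step G o) v x) with hRdef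
    have hvR : v ∈ R := Finset.mem_filter.mpr ⟨Finset.mem_univ _, Relation.ReflTransGen.refl⟩
    have hclosed : ∀ x ∈ R, ∀ y, Step G o x y → y ∈ R := by
      intro x hx y hstep
      exact Finset.mem_filter.mpr ⟨Finset.mem_univ _,
        ((Finset.mem_filter.mp hx).2).tail hstep⟩
    by_cases hex : ∃ w ∈ R, outD G o w ≤ 2
    · obtain ⟨w, hwR, hw⟩ := hex
      have hreach : Relation.ReflTransGen (Step G o) v w := (Finset.mem_filter.mp hwR).2
      have hvw : v ≠ w := fun h => by rw [h] at hv; omega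
      -- extract chain
      obtain ⟨l, hchain, hlast⟩ := List.exists_isChain_cons_of_relationReflTransGen hreach
      have hlne : l ≠ [] := by
        intro h
        subst h
        simp at hlast
        exact hvw hlast
      have hlast2 : l.getLast hlne = w := by
        rw [← hlast, List.getLast_cons hlne]
      have hform : l.dropLast ++ [w] = l := by
        rw [← hlast2]
        exact List.dropLast_append_getLast hlne
      have hchain2 : List.Chain (Step G o) v (l.dropLast ++ [w]) := by
        rw [hform]; exact hchain
      obtain ⟨l', hchain3, hnd, -⟩ :=
        exists_nodup_chain (r := Step G o) l.dropLast.length l.dropLast v w le_rfl hvw hchain2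
      obtain ⟨o', ho'v, e1, e2, e3, e4, hoth⟩ := reverse_path G l' o v w ho hchain3 hnd
      have hlt : excess G o' < excess G o := by
        apply Finset.sum_lt_sum
        · intro x _
          by_cases hxv : x = v
          · subst hxv
            have h1 := hdeg x
            omega
          · by_cases hxw : x = w
            · subst hxw
              omega
            · obtain ⟨g1, g2⟩ := hoth x hxv hxw
              omega
        · refine ⟨v, Finset.mem_univ v, ?_⟩
          have h1 := hdeg v
          omega
      have := hmin o' (Finset.mem_filter.mpr ⟨Finset.mem_univ _, ho'v⟩)
      omega
    · push_neg at hex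
      have hsum : 3 * R.card < ∑ x ∈ R, outD G o x := by
        calc 3 * R.card = ∑ _x ∈ R, 3 := by rw [Finset.sum_const, smul_eq_mul, mul_comm]
          _ < ∑ x ∈ R, outD G o x := by
            apply Finset.sum_lt_sum
            · intro x hx
              exact hex x hx
            · exact ⟨v, hvR, by omega⟩
      have h1 := sum_outD_le R hclosed
      have h2 := e_inside_le hplanar R ⟨v, hvR⟩
      omega
  · -- in-degree bound
    intro v
    by_contra hv
    push_neg at hv   -- D < inD + 3, i.e. inD ≥ D - 2
    set R : Finset V :=
      Finset.univ.filter (fun x => Relation.ReflTransGen (fun p q => Step G o q p) v x) with hRdef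
    have hvR : v ∈ R := Finset.mem_filter.mpr ⟨Finset.mem_univ _, Relation.ReflTransGen.refl⟩
    have hclosed : ∀ x ∈ R, ∀ y, Step G o y x → y ∈ R := by
      intro x hx y hstep
      exact Finset.mem_filter.mpr ⟨Finset.mem_univ _,
        ((Finset.mem_filter.mp hx).2).tail hstep⟩
    by_cases hex : ∃ w ∈ R, inD G o w + 4 ≤ D
    · obtain ⟨w, hwR, hw⟩ := hex
      have hreach' : Relation.ReflTransGen (fun p q => Step G o q p) v w :=
        (Finset.mem_filter.mp hwR).2
      have hreach : Relation.ReflTransGen (Step G o) w v :=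
        Relation.reflTransGen_swap.mp hreach'
      have hwv : w ≠ v := fun h => by rw [h] at hw; omega
      obtain ⟨l, hchain, hlast⟩ := List.exists_isChain_cons_of_relationReflTransGen hreach
      have hlne : l ≠ [] := by
        intro h
        subst h
        simp at hlast
        exact hwv hlast
      have hlast2 : l.getLast hlne = v := by
        rw [← hlast, List.getLast_cons hlne]
      have hform : l.dropLast ++ [v] = l := by
        rw [← hlast2]
        exact List.dropLast_append_getLast hlne
      have hchain2 : List.Chain (Step G o) w (l.dropLast ++ [v]) := by
        rw [hform]; exact hchain
      obtain ⟨l', hchain3, hnd, -⟩ :=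
        exists_nodup_chain (r := Step G o) l.dropLast.length l.dropLast w v le_rfl hwv hchain2
      obtain ⟨o', ho'v, e1, e2, e3, e4, hoth⟩ := reverse_path G l' o w v ho hchain3 hnd
      have hlt : excess G o' < excess G o := by
        apply Finset.sum_lt_sum
        · intro x _
          by_cases hxw : x = w
          · subst hxw
            omega
          · by_cases hxv : x = v
            · subst hxv
              have h1 := hdeg x
              omega
            · obtain ⟨g1, g2⟩ := hoth x hxw hxv
              omega
        · refine ⟨v, Finset.mem_univ v, ?_⟩
          have h1 := hdeg v
          have hwv' : v ≠ w := hwv.symm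
          have h3 := e3
          have h4 := e4
          omega
      have := hmin o' (Finset.mem_filter.mpr ⟨Finset.mem_univ _, ho'v⟩)
      omega
    · push_neg at hex
      have hsum : 3 * R.card < ∑ x ∈ R, inD G o x := by
        calc 3 * R.card = ∑ _x ∈ R, 3 := by rw [Finset.sum_const, smul_eq_mul, mul_comm]
          _ < ∑ x ∈ R, inD G o x := by
            apply Finset.sum_lt_sum
            · intro x hx
              have := hex x hx
              omega
            · exact ⟨v, hvR, by omega⟩
      have h1 := sum_inD_le ho R hclosed
      have h2 := e_inside_le hplanar R ⟨v, hvR⟩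
      omega

end Part3


section Part4
variable {V : Type*} [Fintype V] [DecidableEq V] {G : SimpleGraph V}

lemma swap_sum (G : SimpleGraph V) (g : V → V → ℝ) :
    ∑ v, ∑ u ∈ G.neighborFinset v, g v u = ∑ v, ∑ u ∈ G.neighborFinset v, g u v := by
  classical
  have h1 : ∀ (g' : V → V → ℝ), ∑ v, ∑ u ∈ G.neighborFinset v, g' v u
      = ∑ v, ∑ u, if G.Adj v u then g' v u else 0 := by
    intro g'
    refine Finset.sum_congr rfl fun v _ => ?_
    rw [SimpleGraph.neighborFinset_eq_filter, Finset.sum_filter]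
  rw [h1, h1, Finset.sum_comm]
  refine Finset.sum_congr rfl fun v _ => Finset.sum_congr rfl fun u _ => ?_
  rw [SimpleGraph.adj_comm]

theorem eigenvalue_le (hplanar : PlanarEB G) (hD : 6 ≤ G.maxDegree) (μ : ℝ)
    (hμ : Module.End.HasEigenvalue (Matrix.toLin' (G.adjMatrix ℝ)) μ) :
    μ ≤ 2 * Real.sqrt (3 * ((G.maxDegree : ℝ) - 3)) := by
  classical
  obtain ⟨o, ho, hout, hin⟩ := orientation_exists G hplanar hD
  set D := G.maxDegree with hDdef
  set d : ℝ := (D : ℝ) with hd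
  have hd6 : (6 : ℝ) ≤ d := by
    rw [hd]
    exact_mod_cast hD
  have hd3 : (3:ℝ) ≤ d - 3 := by linarith
  have hs3 : (0:ℝ) < Real.sqrt 3 := Real.sqrt_pos.mpr (by norm_num)
  have hsd : (0:ℝ) < Real.sqrt (d - 3) := Real.sqrt_pos.mpr (by linarith)
  set c₁ : ℝ := Real.sqrt (d - 3) / Real.sqrt 3 with hc1def
  set c₂ : ℝ := Real.sqrt 3 / Real.sqrt (d - 3) with hc2def
  have hc₁ : 0 < c₁ := div_pos hsd hs3
  have hc₂ : 0 < c₂ := div_pos hs3 hsd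
  have hc₁c₂ : c₁ * c₂ = 1 := by
    rw [hc1def, hc2def, div_mul_div_comm, mul_comm]
    exact div_self (ne_of_gt (mul_pos hs3 hsd))
  have hkey : ∀ a b : ℝ, 2*(a*b) ≤ c₁*a^2 + c₂*b^2 := by
    intro a b
    nlinarith [mul_nonneg hc₂.le (sq_nonneg (c₁*a - b)), hc₁c₂, hc₁, hc₂]
  -- eigenvector
  obtain ⟨x, hx⟩ := hμ.exists_hasEigenvector
  have hxe : (G.adjMatrix ℝ).mulVec x = μ • x := by
    have := hx.apply_eq_smul
    rwa [Matrix.toLin'_apply] at this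
  have hxne := hx.right
  set S : ℝ := ∑ v, x v ^ 2 with hSdef
  have hS : 0 < S := by
    obtain ⟨v, hv⟩ := Function.ne_iff.mp hxne
    refine Finset.sum_pos' (fun i _ => sq_nonneg _) ⟨v, Finset.mem_univ v, ?_⟩
    exact lt_of_le_of_ne (sq_nonneg _) (Ne.symm (pow_ne_zero 2 hv))
  have hQ : μ * S = ∑ v, ∑ u ∈ G.neighborFinset v, x u * x v := by
    have : ∀ v, ∑ u ∈ G.neighborFinset v, x u = μ * x v := by
      intro v
      have h1 := congrFun hxe v
      rw [SimpleGraph.adjMatrix_mulVec_apply] at h1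
      simpa using h1
    calc μ * S = ∑ v, (μ * x v) * x v := by
          rw [hSdef, Finset.mul_sum]
          exact Finset.sum_congr rfl fun v _ => by ring
      _ = ∑ v, ∑ u ∈ G.neighborFinset v, x u * x v := by
          refine Finset.sum_congr rfl fun v _ => ?_
          rw [← this v, Finset.sum_mul]
  set cf : V → V → ℝ := fun p q => if o s(p, q) = q then c₁ else c₂ with hcf
  have hpair : ∀ v u, G.Adj v u → x u * x v ≤ (cf v u * x v ^ 2 + cf u v * x u ^ 2) / 2 := by
    intro v u hadj
    have hmem : o s(v, u) ∈ s(v, u) := ho _ (SimpleGraph.mem_edgeFinset.mpr hadj)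
    have hne : v ≠ u := hadj.ne
    rcases Sym2.mem_iff.mp hmem with h | h
    · -- head is v
      have h1 : cf v u = c₂ := by
        rw [hcf]
        simp only [h]
        exact if_neg hne
      have h2 : cf u v = c₁ := by
        rw [hcf]
        have : o s(u, v) = v := by rw [Sym2.eq_swap]; exact h
        simp [this]
      rw [h1, h2]
      have := hkey (x u) (x v)
      linarith
    · -- head is u
      have h1 : cf v u = c₁ := by rw [hcf]; simp [h]
      have h2 : cf u v = c₂ := by
        rw [hcf]
        have hov : o s(u, v) = u := by rw [Sym2.eq_swap]; exact h
        simp only [hov]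
        exact if_neg (fun hh => hne hh.symm)
      rw [h1, h2]
      have := hkey (x v) (x u)
      linarith
  have hstep1 : μ * S ≤ ∑ v, ∑ u ∈ G.neighborFinset v, (cf v u * x v ^ 2 + cf u v * x u ^ 2) / 2 := by
    rw [hQ]
    refine Finset.sum_le_sum fun v _ => Finset.sum_le_sum fun u hu => ?_
    exact hpair v u ((SimpleGraph.mem_neighborFinset _ _ _).mp hu)
  have hswap : ∑ v, ∑ u ∈ G.neighborFinset v, cf u v * x u ^ 2
      = ∑ v, ∑ u ∈ G.neighborFinset v, cf v u * x v ^ 2 :=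
    (swap_sum G (fun v u => cf v u * x v ^ 2)).symm
  have hstep2 : μ * S ≤ ∑ v, (∑ u ∈ G.neighborFinset v, cf v u) * x v ^ 2 := by
    refine hstep1.trans (le_of_eq ?_)
    have expand : ∀ v, ∑ u ∈ G.neighborFinset v, (cf v u * x v ^ 2 + cf u v * x u ^ 2) / 2
        = (∑ u ∈ G.neighborFinset v, cf v u * x v ^ 2) / 2
          + (∑ u ∈ G.neighborFinset v, cf u v * x u ^ 2) / 2 := by
      intro v
      rw [← Finset.sum_div, ← add_div, ← Finset.sum_add_distrib]
    calc ∑ v, ∑ u ∈ G.neighborFinset v, (cf v u * x v ^ 2 + cf u v * x u ^ 2) / 2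
        = ∑ v, ((∑ u ∈ G.neighborFinset v, cf v u * x v ^ 2) / 2
          + (∑ u ∈ G.neighborFinset v, cf u v * x u ^ 2) / 2) :=
          Finset.sum_congr rfl fun v _ => expand v
      _ = (∑ v, ∑ u ∈ G.neighborFinset v, cf v u * x v ^ 2) / 2
          + (∑ v, ∑ u ∈ G.neighborFinset v, cf u v * x u ^ 2) / 2 := by
          rw [Finset.sum_add_distrib, ← Finset.sum_div, ← Finset.sum_div]
      _ = ∑ v, ∑ u ∈ G.neighborFinset v, cf v u * x v ^ 2 := by
          rw [hswap]; ring
      _ = ∑ v, (∑ u ∈ G.neighborFinset v, cf v u) * x v ^ 2 := by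
          exact Finset.sum_congr rfl fun v _ => by rw [Finset.sum_mul]
  set C : ℝ := 2 * Real.sqrt (3 * (d - 3)) with hCdef
  have hCval : c₁ * 3 + c₂ * (d - 3) = C := by
    rw [hc1def, hc2def, hCdef]
    have h3 : (3:ℝ) / Real.sqrt 3 = Real.sqrt 3 := Real.div_sqrt
    have h4 : (d - 3) / Real.sqrt (d - 3) = Real.sqrt (d - 3) := Real.div_sqrt
    have h5 : Real.sqrt 3 * Real.sqrt (d - 3) = Real.sqrt (3 * (d - 3)) :=
      (Real.sqrt_mul (by norm_num) _).symm
    calc Real.sqrt (d-3) / Real.sqrt 3 * 3 + Real.sqrt 3 / Real.sqrt (d-3) * (d-3)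
        = Real.sqrt (d-3) * (3 / Real.sqrt 3) + Real.sqrt 3 * ((d-3) / Real.sqrt (d-3)) := by
          ring
      _ = Real.sqrt (d-3) * Real.sqrt 3 + Real.sqrt 3 * Real.sqrt (d-3) := by rw [h3, h4]
      _ = 2 * Real.sqrt (3 * (d - 3)) := by rw [← h5]; ring
  have hinner : ∀ v, ∑ u ∈ G.neighborFinset v, cf v u ≤ C := by
    intro v
    have hsplit : ∑ u ∈ G.neighborFinset v, cf v u
        = c₁ * outD G o v + c₂ * inD G o v := by
      rw [hcf, outD, inD, Finset.sum_ite, Finset.sum_const, Finset.sum_const]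
      simp [nsmul_eq_mul]
      ring
    rw [hsplit]
    have h1 : (outD G o v : ℝ) ≤ 3 := by exact_mod_cast hout v
    have h2 : (inD G o v : ℝ) ≤ d - 3 := by
      have := hin v
      have : (inD G o v : ℝ) + 3 ≤ d := by
        rw [hd]
        exact_mod_cast this
      linarith
    calc c₁ * outD G o v + c₂ * inD G o v ≤ c₁ * 3 + c₂ * (d - 3) := by
          have := mul_le_mul_of_nonneg_left h1 hc₁.le
          have := mul_le_mul_of_nonneg_left h2 hc₂.le
          linarith
      _ = C := hCval
  have hfinal : μ * S ≤ C * S := by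
    refine hstep2.trans ?_
    rw [hSdef, Finset.mul_sum]
    refine Finset.sum_le_sum fun v _ => ?_
    exact mul_le_mul_of_nonneg_right (hinner v) (sq_nonneg _)
  exact le_of_mul_le_mul_right (by linarith [hfinal]) hS

end Part4
end PlanarSpec

theorem planar_spectral_radius_bound {V : Type*} [Fintype V] [DecidableEq V]
    (G : SimpleGraph V) (hplanar : PlanarEB G) (hD : 6 ≤ G.maxDegree) :
    specRad G ≤ 2 * Real.sqrt (3 * ((G.maxDegree : ℝ) - 3)) := by
  refine Real.sSup_le (fun μ hμ => ?_) (by positivity)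
  exact PlanarSpec.eigenvalue_le hplanar hD μ hμ
end

section
/- Let G₁, …, G_m be subgraphs of a finite simple graph G such that each edge of G appears in at least p of the subgraphs (p ≥ 1). Then ρ(G) ≤ (1/p)·∑_{i=1}^m ρ(G_i). -/
open SimpleGraph Finset Matrix
open scoped Classical

section Aux

variable {n : Type*} [Fintype n] [DecidableEq n]

local notation "⟪" x ", " y "⟫" => @inner ℝ _ _ x y

lemma inner_eq_dot (x y : EuclideanSpace ℝ n) : ⟪x, y⟫ = ⇑x ⬝ᵥ ⇑y := by
  simp [PiLp.inner_apply, dotProduct, mul_comm]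

lemma eigset (A : Matrix n n ℝ) (hA : A.IsHermitian) :
    {μ : ℝ | Module.End.HasEigenvalue (Matrix.toLin' A) μ} = Set.range hA.eigenvalues := by
  ext μ
  rw [Set.mem_setOf_eq, Module.End.hasEigenvalue_iff_mem_spectrum,
    show Matrix.toLin' A = Matrix.toLinAlgEquiv' A from rfl,
    AlgEquiv.spectrum_eq, hA.spectrum_real_eq_range_eigenvalues]

lemma rayleigh (A : Matrix n n ℝ) (hA : A.IsHermitian) (y : n → ℝ) :
    y ⬝ᵥ (A *ᵥ y) ≤ sSup (Set.range hA.eigenvalues) * (y ⬝ᵥ y) := by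
  set b := hA.eigenvectorBasis with hb
  set M := sSup (Set.range hA.eigenvalues) with hM
  have hMle : ∀ i, hA.eigenvalues i ≤ M :=
    fun i => le_csSup (Set.finite_range _).bddAbove ⟨i, rfl⟩
  have hAT : Aᵀ = A := by
    rw [← Matrix.conjTranspose_eq_transpose_of_trivial]; exact hA.eq
  have hbd : ∀ i, ⇑(b i) ⬝ᵥ (A *ᵥ y) = hA.eigenvalues i * (⇑(b i) ⬝ᵥ y) := by
    intro i
    rw [Matrix.dotProduct_mulVec, ← Matrix.mulVec_transpose, hAT,
      hA.mulVec_eigenvectorBasis]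
    simp [smul_dotProduct, hb]
  set Y : EuclideanSpace ℝ n := (WithLp.equiv 2 (n → ℝ)).symm y with hYdef
  set Z : EuclideanSpace ℝ n := (WithLp.equiv 2 (n → ℝ)).symm (A *ᵥ y) with hZdef
  have hY : ⇑Y = y := rfl
  have hZ : ⇑Z = A *ᵥ y := rfl
  have h2 : y ⬝ᵥ y = ∑ i, (⇑(b i) ⬝ᵥ y) ^ 2 := by
    have h := b.sum_inner_mul_inner Y Y
    rw [inner_eq_dot, hY] at h
    rw [← h]
    refine Finset.sum_congr rfl fun i _ => ?_
    simp only [inner_eq_dot, hY, dotProduct_comm y, sq]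
  have h1 : y ⬝ᵥ (A *ᵥ y) = ∑ i, hA.eigenvalues i * (⇑(b i) ⬝ᵥ y) ^ 2 := by
    have h := b.sum_inner_mul_inner Y Z
    rw [inner_eq_dot, hY, hZ] at h
    rw [← h]
    refine Finset.sum_congr rfl fun i _ => ?_
    simp only [inner_eq_dot, hY, hZ, dotProduct_comm y]
    rw [hbd i]; ring
  rw [h1, h2, Finset.mul_sum]
  exact Finset.sum_le_sum fun i _ =>
    mul_le_mul_of_nonneg_right (hMle i) (sq_nonneg _)

end Aux

theorem spectral_radius_fractional_subadditive {V : Type*} [Fintype V] [DecidableEq V]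
    (G : SimpleGraph V) (m p : ℕ) (hp : 1 ≤ p)
    (Gs : Fin m → SimpleGraph V) (hsub : ∀ i, Gs i ≤ G)
    (hcover : ∀ u v, G.Adj u v → p ≤ (Finset.univ.filter (fun i => (Gs i).Adj u v)).card) :
    specRad G ≤ (1 / (p : ℝ)) * ∑ i, specRad (Gs i) := by
  have hp0 : (0 : ℝ) < p := by exact_mod_cast hp
  set A := G.adjMatrix ℝ with hAdef
  have herm : ∀ (H : SimpleGraph V), (H.adjMatrix ℝ).IsHermitian := by
    intro H
    rw [Matrix.IsHermitian, Matrix.conjTranspose_eq_transpose_of_trivial]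
    exact H.isSymm_adjMatrix
  have hspec : ∀ (H : SimpleGraph V), specRad H = sSup (Set.range (herm H).eigenvalues) := by
    intro H; rw [specRad, eigset _ (herm H)]
  by_cases hV : Nonempty V
  swap
  · have hempty : ∀ (H : SimpleGraph V), specRad H = 0 := by
      intro H
      rw [hspec H, Set.range_eq_empty_iff.mpr (not_nonempty_iff.mp hV), Real.sSup_empty]
    rw [hempty]
    simp only [hempty]
    simp
  · -- main case
    obtain ⟨j, hj⟩ := (Set.range_nonempty (herm G).eigenvalues).csSup_mem
      (Set.finite_range _)
    set ρ := sSup (Set.range (herm G).eigenvalues) with hρdef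
    set x : V → ℝ := ⇑((herm G).eigenvectorBasis j) with hx
    have hAx : A *ᵥ x = ρ • x := by
      rw [hAdef, (herm G).mulVec_eigenvectorBasis, hj]
    have hx1 : x ⬝ᵥ x = 1 := by
      have h := orthonormal_iff_ite.mp ((herm G).eigenvectorBasis).orthonormal j j
      rw [inner_eq_dot] at h
      simpa using h
    have hρeq : ρ = x ⬝ᵥ (A *ᵥ x) := by
      rw [hAx, dotProduct_smul, hx1]; simp
    set y : V → ℝ := fun v => |x v| with hy
    have hyy : y ⬝ᵥ y = 1 := by
      rw [← hx1]
      simp only [dotProduct, hy, abs_mul_abs_self]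
    have hdot : ∀ (B : Matrix V V ℝ) (z : V → ℝ),
        z ⬝ᵥ (B *ᵥ z) = ∑ u, ∑ v, B u v * (z u * z v) := by
      intro B z
      simp only [dotProduct, Matrix.mulVec, Finset.mul_sum]
      exact Finset.sum_congr rfl fun u _ => Finset.sum_congr rfl fun v _ => by ring
    have hAnn : ∀ u v, 0 ≤ A u v := by
      intro u v; rw [hAdef]; simp [SimpleGraph.adjMatrix_apply]; positivity
    have hstep1 : ρ ≤ y ⬝ᵥ (A *ᵥ y) := by
      rw [hρeq, hdot, hdot]
      refine Finset.sum_le_sum fun u _ => Finset.sum_le_sum fun v _ => ?_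
      have h1 : A u v * (x u * x v) ≤ |A u v * (x u * x v)| := le_abs_self _
      calc A u v * (x u * x v) ≤ |A u v * (x u * x v)| := le_abs_self _
        _ = A u v * (y u * y v) := by
            rw [abs_mul, abs_mul, abs_of_nonneg (hAnn u v)]
    have hentry : ∀ u v, (p : ℝ) * A u v ≤ ∑ i, (Gs i).adjMatrix ℝ u v := by
      intro u v
      by_cases h : G.Adj u v
      · have hc := hcover u v h
        have hsum : ∑ i, (Gs i).adjMatrix ℝ u v
            = ((Finset.univ.filter (fun i => (Gs i).Adj u v)).card : ℝ) := by
          simp [SimpleGraph.adjMatrix_apply, Finset.sum_boole]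
        rw [hsum, hAdef]
        simp only [SimpleGraph.adjMatrix_apply, if_pos h, mul_one]
        exact_mod_cast hc
      · rw [hAdef]
        simp only [SimpleGraph.adjMatrix_apply, if_neg h, mul_zero]
        exact Finset.sum_nonneg fun i _ => by
          split <;> norm_num
    have hynn : ∀ u v, 0 ≤ y u * y v := fun u v =>
      mul_nonneg (abs_nonneg _) (abs_nonneg _)
    have hstep2 : (p : ℝ) * (y ⬝ᵥ (A *ᵥ y)) ≤ ∑ i, y ⬝ᵥ ((Gs i).adjMatrix ℝ *ᵥ y) := by
      simp_rw [hdot]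
      rw [Finset.mul_sum]
      rw [Finset.sum_comm (γ := Fin m)]
      refine Finset.sum_le_sum fun u _ => ?_
      rw [Finset.mul_sum, Finset.sum_comm (γ := Fin m)]
      refine Finset.sum_le_sum fun v _ => ?_
      calc (p : ℝ) * (A u v * (y u * y v)) = ((p : ℝ) * A u v) * (y u * y v) := by ring
        _ ≤ (∑ i, (Gs i).adjMatrix ℝ u v) * (y u * y v) :=
            mul_le_mul_of_nonneg_right (hentry u v) (hynn u v)
        _ = ∑ i, (Gs i).adjMatrix ℝ u v * (y u * y v) := Finset.sum_mul _ _ _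
    have hstep3 : ∀ i, y ⬝ᵥ ((Gs i).adjMatrix ℝ *ᵥ y) ≤ specRad (Gs i) := by
      intro i
      have := rayleigh _ (herm (Gs i)) y
      rw [hyy, mul_one] at this
      rw [hspec (Gs i)]
      exact this
    have hfinal : (p : ℝ) * specRad G ≤ ∑ i, specRad (Gs i) := by
      calc (p : ℝ) * specRad G = (p : ℝ) * ρ := by rw [hspec G]
        _ ≤ (p : ℝ) * (y ⬝ᵥ (A *ᵥ y)) := by
            exact mul_le_mul_of_nonneg_left hstep1 (le_of_lt hp0)
        _ ≤ ∑ i, y ⬝ᵥ ((Gs i).adjMatrix ℝ *ᵥ y) := hstep2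
        _ ≤ ∑ i, specRad (Gs i) := Finset.sum_le_sum fun i _ => hstep3 i
    rw [one_div, inv_mul_eq_div, le_div_iff₀ hp0, mul_comm]
    exact hfinal
end

section
/- Suppose the edge set of K_{3,n} is partitioned into a 2-degenerate graph T and a graph L of maximum degree at most s. Then n ≤ 3s + 2. -/
open SimpleGraph Finset
open scoped Classical

theorem K3n_decomposition_bound (n s : ℕ) (T L : SimpleGraph (Fin 3 ⊕ Fin n))
    (hunion : T ⊔ L = completeBipartiteGraph (Fin 3) (Fin n)) (hdisj : T ⊓ L = ⊥)
    (hT : Degenerate T 2) (hL : ∀ v, L.degree v ≤ s) :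
    n ≤ 3 * s + 2 := by
  classical
  have hadj : ∀ (i : Fin 3) (j : Fin n),
      T.Adj (Sum.inl i) (Sum.inr j) ∨ L.Adj (Sum.inl i) (Sum.inr j) := by
    intro i j
    have h := congrArg (fun G : SimpleGraph (Fin 3 ⊕ Fin n) =>
      G.Adj (Sum.inl i) (Sum.inr j)) hunion
    simp only [sup_adj, completeBipartiteGraph_adj] at h
    simp at h
    exact h
  set F : Finset (Fin n) :=
    univ.filter (fun j => ∀ i, T.Adj (Sum.inl i) (Sum.inr j)) with hFdef
  have hF : F.card ≤ 2 := by
    by_contra hcon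
    push_neg at hcon
    obtain ⟨F', hF'sub, hF'card⟩ := Finset.exists_subset_card_eq (s := F) (n := 3) hcon
    set S : Finset (Fin 3 ⊕ Fin n) :=
      (univ.image Sum.inl) ∪ (F'.image Sum.inr) with hSdef
    obtain ⟨v, hvS, hvdeg⟩ := hT S ⟨Sum.inl 0, by simp [hSdef]⟩
    have key : 3 ≤ (S.filter (fun u => T.Adj v u)).card := by
      rcases v with i | j
      · have hsub : F'.image Sum.inr ⊆ S.filter (fun u => T.Adj (Sum.inl i) u) := by
          intro u hu
          simp only [Finset.mem_image] at hu
          obtain ⟨j, hj, rfl⟩ := hu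
          have hjF := hF'sub hj
          simp only [hFdef, Finset.mem_filter] at hjF
          exact Finset.mem_filter.2
            ⟨Finset.mem_union_right _ (Finset.mem_image_of_mem _ hj), hjF.2 i⟩
        calc 3 = (F'.image Sum.inr).card := by
              rw [Finset.card_image_of_injective _ Sum.inr_injective, hF'card]
          _ ≤ _ := Finset.card_le_card hsub
      · have hjF' : j ∈ F' := by
          simp only [hSdef, Finset.mem_union, Finset.mem_image] at hvS
          rcases hvS with ⟨i, _, h⟩ | ⟨j', hj', h⟩
          · exact absurd h (by simp)
          · obtain rfl : j' = j := Sum.inr_injective h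
            exact hj'
        have hjF := hF'sub hjF'
        simp only [hFdef, Finset.mem_filter] at hjF
        have hsub : univ.image Sum.inl ⊆ S.filter (fun u => T.Adj (Sum.inr j) u) := by
          intro u hu
          simp only [Finset.mem_image] at hu
          obtain ⟨i, _, rfl⟩ := hu
          exact Finset.mem_filter.2
            ⟨Finset.mem_union_left _ (Finset.mem_image_of_mem _ (Finset.mem_univ i)),
              (hjF.2 i).symm⟩
        calc 3 = (univ.image (Sum.inl : Fin 3 → Fin 3 ⊕ Fin n)).card := by
              rw [Finset.card_image_of_injective _ Sum.inl_injective, Finset.card_univ,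
                Fintype.card_fin]
          _ ≤ _ := Finset.card_le_card hsub
    omega
  have hcompl : Fᶜ.card ≤ 3 * s := by
    have hsub : Fᶜ ⊆ (univ : Finset (Fin 3)).biUnion
        (fun i => univ.filter (fun j : Fin n => L.Adj (Sum.inl i) (Sum.inr j))) := by
      intro j hj
      simp only [Finset.mem_compl, hFdef, Finset.mem_filter, Finset.mem_univ,
        true_and, not_forall] at hj
      obtain ⟨i, hi⟩ := hj
      have : L.Adj (Sum.inl i) (Sum.inr j) := (hadj i j).resolve_left hi
      exact Finset.mem_biUnion.2 ⟨i, Finset.mem_univ i,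
        Finset.mem_filter.2 ⟨Finset.mem_univ j, this⟩⟩
    have hcard : ∀ i : Fin 3,
        (univ.filter (fun j : Fin n => L.Adj (Sum.inl i) (Sum.inr j))).card ≤ s := by
      intro i
      have hinj : ∀ j ∈ univ.filter (fun j : Fin n => L.Adj (Sum.inl i) (Sum.inr j)),
          (Sum.inr j : Fin 3 ⊕ Fin n) ∈ L.neighborFinset (Sum.inl i) := by
        intro j hj
        simp only [Finset.mem_filter] at hj
        exact (L.mem_neighborFinset _ _).2 hj.2
      calc (univ.filter (fun j : Fin n => L.Adj (Sum.inl i) (Sum.inr j))).card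
          ≤ (L.neighborFinset (Sum.inl i)).card :=
            Finset.card_le_card_of_injOn _ hinj
              (fun a _ b _ h => Sum.inr_injective h)
        _ = L.degree (Sum.inl i) := (L.card_neighborFinset_eq_degree _)
        _ ≤ s := hL _
    calc Fᶜ.card ≤ ∑ i : Fin 3,
          (univ.filter (fun j : Fin n => L.Adj (Sum.inl i) (Sum.inr j))).card :=
            (Finset.card_le_card hsub).trans Finset.card_biUnion_le
      _ ≤ ∑ _i : Fin 3, s := Finset.sum_le_sum (fun i _ => hcard i)
      _ = 3 * s := by simp [Finset.sum_const, mul_comm]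
  have htot : F.card + Fᶜ.card = n := by
    rw [Finset.card_add_card_compl]
    simp
  omega
end

section
/- Let G be a graph with vertex set partitioned into finite levels S₀, S₁, S₂, … such that all edges of G join consecutive levels, |S_i| = k·r^i for r = (d−k)/k > 1, and the number of edges between S_i and S_{i+1} equals (d−k)|S_i|. Then for any q with 0 < q < √(k/(d−k)), the function f defined by f(v) = q^i for v ∈ S_i lies in ℓ²(V) and satisfies ⟨f, Af⟩ = 2q(d−k)·‖f‖². -/
open SimpleGraph

/-- For a graph layered into levels `S_i` of size `k·r^i` (`r = (d-k)/k > 1`), with all edges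
between consecutive levels and `(d-k)|S_i|` edges between `S_i` and `S_{i+1}`, the test function
`f(v) = q^{ℓ(v)}` with `0 < q < √(k/(d-k))` lies in `ℓ²` and satisfies
`⟨f, Af⟩ = 2q(d-k)·‖f‖²`. -/
theorem layered_test_function {V : Type*} (G : SimpleGraph V) (k d : ℕ)
    (hk : 0 < k) (hkd : k < d) (hdvd : k ∣ d) (hr : 2 * k < d) (ℓ : V → ℕ)
    (hlevels : ∀ i : ℕ, {v : V | ℓ v = i}.ncard = k * ((d - k) / k) ^ i)
    (hedges : ∀ u v : V, G.Adj u v → ℓ u + 1 = ℓ v ∨ ℓ v + 1 = ℓ u)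
    (hcount : ∀ i : ℕ,
      {e : Sym2 V | e ∈ G.edgeSet ∧
        ∃ u v : V, e = s(u, v) ∧ ℓ u = i ∧ ℓ v = i + 1}.ncard
        = (d - k) * (k * ((d - k) / k) ^ i))
    (q : ℝ) (hq0 : 0 < q) (hq : q < Real.sqrt ((k : ℝ) / ((d : ℝ) - k))) :
    Summable (fun v : V => (q ^ ℓ v) ^ 2) ∧
      2 * ∑' e : G.edgeSet,
          Sym2.lift ⟨fun u v => q ^ ℓ u * q ^ ℓ v, fun u v => mul_comm _ _⟩ e.1
        = 2 * q * ((d : ℝ) - k) * ∑' v : V, (q ^ ℓ v) ^ 2 := by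
  classical
  set r : ℕ := (d - k) / k with hrdef
  have hk0 : (0:ℝ) < (k:ℝ) := by exact_mod_cast hk
  have hdk0 : (0:ℝ) < (d:ℝ) - (k:ℝ) := by
    have : (k:ℝ) < d := by exact_mod_cast hkd
    linarith
  have hdkdvd : k ∣ (d - k) := Nat.dvd_sub hdvd dvd_rfl
  have hrcast : ((r : ℕ) : ℝ) = ((d:ℝ) - k) / k := by
    rw [hrdef, Nat.cast_div hdkdvd hk0.ne', Nat.cast_sub hkd.le]
  have hq2 : q ^ 2 < (k:ℝ) / ((d:ℝ) - k) := (Real.lt_sqrt hq0.le).mp hq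
  set x : ℝ := (r:ℝ) * q ^ 2 with hxdef
  have hx0 : 0 ≤ x := by positivity
  have hx1 : x < 1 := by
    rw [hxdef, hrcast, div_mul_eq_mul_div, div_lt_one hk0]
    calc ((d:ℝ) - k) * q ^ 2 < ((d:ℝ) - k) * ((k:ℝ) / ((d:ℝ) - k)) :=
          mul_lt_mul_of_pos_left hq2 hdk0
      _ = k := by field_simp
  have hr1 : 0 < r := by
    rw [hrdef]
    exact Nat.div_pos (by omega) hk
  have hN : ∀ i, 0 < k * r ^ i := fun i => Nat.mul_pos hk (pow_pos hr1 i)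
  -- vertex fibers are finite
  have hfinV : ∀ i, {v : V | ℓ v = i}.Finite := by
    intro i
    by_contra h
    have h2 : {v : V | ℓ v = i}.Infinite := h
    have := h2.ncard
    rw [hlevels i] at this
    exact (hN i).ne' this
  haveI : ∀ i : ℕ, Finite {v : V // ℓ v = i} := fun i => (hfinV i).to_subtype
  -- fiber sums for vertices
  have hfibV : ∀ i : ℕ, ∑' v : {v : V // ℓ v = i}, (q ^ ℓ v.1) ^ 2
      = ((k * r ^ i : ℕ) : ℝ) * (q ^ i) ^ 2 := by
    intro i
    calc ∑' v : {v : V // ℓ v = i}, (q ^ ℓ v.1) ^ 2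
        = ∑' _ : {v : V // ℓ v = i}, (q ^ i) ^ 2 :=
          tsum_congr fun v => by rw [v.2]
      _ = Nat.card {v : V // ℓ v = i} • (q ^ i) ^ 2 := tsum_const _
      _ = ((k * r ^ i : ℕ) : ℝ) * (q ^ i) ^ 2 := by
          rw [nsmul_eq_mul]
          congr 1
          exact_mod_cast congrArg Nat.cast
            ((Nat.card_coe_set_eq {v : V | ℓ v = i}).trans (hlevels i))
  have houterV : Summable (fun i : ℕ => ((k * r ^ i : ℕ) : ℝ) * (q ^ i) ^ 2) := by
    refine ((summable_geometric_of_lt_one hx0 hx1).mul_left (k : ℝ)).congr fun i => ?_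
    rw [hxdef, mul_pow]
    push_cast
    ring
  have hnnV : ∀ p : Σ i : ℕ, {v : V // ℓ v = i}, 0 ≤ (q ^ ℓ p.2.1) ^ 2 :=
    fun p => sq_nonneg _
  have hsigV : Summable (fun p : Σ i : ℕ, {v : V // ℓ v = i} => (q ^ ℓ p.2.1) ^ 2) := by
    refine (summable_sigma_of_nonneg hnnV).mpr ⟨fun i => Summable.of_finite, ?_⟩
    exact houterV.congr fun i => (hfibV i).symm
  have hsumV : Summable (fun v : V => (q ^ ℓ v) ^ 2) :=
    (Equiv.sigmaFiberEquiv ℓ).summable_iff.mp hsigV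
  have htsumV : ∑' v : V, (q ^ ℓ v) ^ 2 = ∑' i : ℕ, ((k * r ^ i : ℕ) : ℝ) * (q ^ i) ^ 2 := by
    rw [← (Equiv.sigmaFiberEquiv ℓ).tsum_eq (fun v : V => (q ^ ℓ v) ^ 2)]
    exact (hsigV.tsum_sigma).trans (tsum_congr hfibV)
  -- edge side
  set L : Sym2 V → ℕ := Sym2.lift ⟨fun u v => min (ℓ u) (ℓ v), fun u v => min_comm _ _⟩
    with hLdef
  set g : Sym2 V → ℝ := Sym2.lift ⟨fun u v => q ^ ℓ u * q ^ ℓ v, fun u v => mul_comm _ _⟩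
    with hgdef
  have key : ∀ e : G.edgeSet, ∀ i : ℕ,
      L e.1 = i ↔ ∃ u v : V, (e : Sym2 V) = s(u, v) ∧ ℓ u = i ∧ ℓ v = i + 1 := by
    rintro ⟨e, he⟩ i
    induction e using Sym2.inductionOn with
    | hf u v =>
      have hadj : G.Adj u v := he
      constructor
      · intro hL
        have hL' : min (ℓ u) (ℓ v) = i := hL
        rcases hedges u v hadj with h | h
        · have h1 : ℓ u = i := by
            rw [min_eq_left (by omega : ℓ u ≤ ℓ v)] at hL'; exact hL'
          exact ⟨u, v, rfl, h1, by omega⟩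
        · have h1 : ℓ v = i := by
            rw [min_eq_right (by omega : ℓ v ≤ ℓ u)] at hL'; exact hL'
          exact ⟨v, u, Sym2.eq_swap, h1, by omega⟩
      · rintro ⟨a, b, hab, ha, hb⟩
        show min (ℓ u) (ℓ v) = i
        rcases Sym2.eq_iff.mp hab with ⟨rfl, rfl⟩ | ⟨rfl, rfl⟩
        · rw [min_eq_left (by omega)]; exact ha
        · rw [min_eq_right (by omega)]; exact ha
  have eqv : ∀ i : ℕ, {e : G.edgeSet // L e.1 = i} ≃
      {e : Sym2 V | e ∈ G.edgeSet ∧ ∃ u v : V, e = s(u, v) ∧ ℓ u = i ∧ ℓ v = i + 1} :=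
    fun i =>
    { toFun := fun e => ⟨e.1.1, e.1.2, (key e.1 i).mp e.2⟩
      invFun := fun e => ⟨⟨e.1, e.2.1⟩, (key ⟨e.1, e.2.1⟩ i).mpr e.2.2⟩
      left_inv := fun e => rfl
      right_inv := fun e => rfl }
  have hME : ∀ i, 0 < (d - k) * (k * r ^ i) := fun i => Nat.mul_pos (by omega) (hN i)
  have hfinE : ∀ i : ℕ,
      {e : Sym2 V | e ∈ G.edgeSet ∧ ∃ u v : V, e = s(u, v) ∧ ℓ u = i ∧ ℓ v = i + 1}.Finite := by
    intro i
    by_contra h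
    have h2 : Set.Infinite _ := h
    have := h2.ncard
    rw [hcount i] at this
    exact (hME i).ne' this
  haveI : ∀ i : ℕ,
      Finite {e : Sym2 V | e ∈ G.edgeSet ∧ ∃ u v : V, e = s(u, v) ∧ ℓ u = i ∧ ℓ v = i + 1} :=
    fun i => (hfinE i).to_subtype
  haveI : ∀ i : ℕ, Finite {e : G.edgeSet // L e.1 = i} :=
    fun i => Finite.of_equiv _ (eqv i).symm
  have hcard : ∀ i : ℕ, Nat.card {e : G.edgeSet // L e.1 = i} = (d - k) * (k * r ^ i) := by
    intro i
    rw [Nat.card_congr (eqv i), Nat.card_coe_set_eq, hcount i]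
  have hval : ∀ i : ℕ, ∀ e : {e : G.edgeSet // L e.1 = i}, g e.1.1 = q ^ i * q ^ (i + 1) := by
    intro i e
    obtain ⟨u, v, hab, ha, hb⟩ := (key e.1 i).mp e.2
    rw [hgdef, hab, Sym2.lift_mk]
    show q ^ ℓ u * q ^ ℓ v = q ^ i * q ^ (i + 1)
    rw [ha, hb]
  have hfibE : ∀ i : ℕ, ∑' e : {e : G.edgeSet // L e.1 = i}, g e.1.1
      = (((d - k) * (k * r ^ i) : ℕ) : ℝ) * (q ^ i * q ^ (i + 1)) := by
    intro i
    calc ∑' e : {e : G.edgeSet // L e.1 = i}, g e.1.1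
        = ∑' _ : {e : G.edgeSet // L e.1 = i}, (q ^ i * q ^ (i + 1)) :=
          tsum_congr (hval i)
      _ = Nat.card {e : G.edgeSet // L e.1 = i} • (q ^ i * q ^ (i + 1)) := tsum_const _
      _ = (((d - k) * (k * r ^ i) : ℕ) : ℝ) * (q ^ i * q ^ (i + 1)) := by
          rw [nsmul_eq_mul, hcard i]
  have hg0 : ∀ e : Sym2 V, 0 ≤ g e := by
    intro e
    induction e using Sym2.inductionOn with
    | hf u v => rw [hgdef, Sym2.lift_mk]; positivity
  have houterE : Summable (fun i : ℕ => (((d - k) * (k * r ^ i) : ℕ) : ℝ)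
      * (q ^ i * q ^ (i + 1))) := by
    refine ((summable_geometric_of_lt_one hx0 hx1).mul_left
      (((d - k : ℕ) : ℝ) * k * q)).congr fun i => ?_
    rw [hxdef, mul_pow]
    push_cast
    ring
  have hsigE : Summable (fun p : Σ i : ℕ, {e : G.edgeSet // L e.1 = i} => g p.2.1.1) := by
    refine (summable_sigma_of_nonneg fun p => hg0 _).mpr
      ⟨fun i => Summable.of_finite, ?_⟩
    exact houterE.congr fun i => (hfibE i).symm
  have htsumE : ∑' e : G.edgeSet, g e.1
      = ∑' i : ℕ, (((d - k) * (k * r ^ i) : ℕ) : ℝ) * (q ^ i * q ^ (i + 1)) := by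
    rw [← (Equiv.sigmaFiberEquiv (fun e : G.edgeSet => L e.1)).tsum_eq
      (fun e : G.edgeSet => g e.1)]
    exact (hsigE.tsum_sigma).trans (tsum_congr hfibE)
  refine ⟨hsumV, ?_⟩
  have hterm : ∀ i : ℕ, (((d - k) * (k * r ^ i) : ℕ) : ℝ) * (q ^ i * q ^ (i + 1))
      = q * ((d : ℝ) - k) * (((k * r ^ i : ℕ) : ℝ) * (q ^ i) ^ 2) := by
    intro i
    push_cast [Nat.cast_sub hkd.le]
    ring
  show 2 * ∑' e : G.edgeSet, g e.1 = 2 * q * ((d : ℝ) - k) * ∑' v : V, (q ^ ℓ v) ^ 2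
  rw [htsumE, htsumV, tsum_congr hterm, tsum_mul_left]
  ring
end
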